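/- arXiv:2203.00681 — 6 statements merged into one kernel-verified Lean document; each statement's English description precedes it below -/
import Mathlib

section
/- For integers n ≥ 3 and k ≥ 2, under the identification of the vertex set Z_n × {0,…,k−1} of the ring-of-cliques graph G_RC(n,k) with the index set of ℝ^{nk} = ℝ^n ⊗ ℝ^k, the Laplacian of G_RC(n,k) decomposes as L(G_RC(n,k)) = I_n ⊗ L(K_k) + L(C_n) ⊗ B, where B is the k×k matrix with a single 1 in entry (0,0) and zeros elsewhere. -/
open Matrix Kronecker

/-- The ring-of-cliques graph `G_RC(n,k)`: `n` cliques of size `k`, whose `0`-th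
vertices are connected in a ring. Vertex `(i, a)` is adjacent to `(j, b)` iff
either `i = j` and `a ≠ b`, or `a = b = 0` and `j ≡ i ± 1 (mod n)`. -/
def ringClique (n k : ℕ) : SimpleGraph (Fin n × Fin k) where
  Adj v w := v ≠ w ∧ (v.1 = w.1 ∨
    (v.2.val = 0 ∧ w.2.val = 0 ∧
      (w.1.val = (v.1.val + 1) % n ∨ v.1.val = (w.1.val + 1) % n)))
  symm := by
    constructor
    rintro v w ⟨hne, h⟩
    refine ⟨fun h' => hne h'.symm, ?_⟩
    rcases h with h | ⟨h1, h2, h3⟩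
    · exact Or.inl h.symm
    · exact Or.inr ⟨h2, h1, h3.symm⟩
  loopless := ⟨fun v h => h.1 rfl⟩

instance (n k : ℕ) : DecidableRel (ringClique n k).Adj := fun v w =>
  decidable_of_iff (v ≠ w ∧ (v.1 = w.1 ∨
    (v.2.val = 0 ∧ w.2.val = 0 ∧
      (w.1.val = (v.1.val + 1) % n ∨ v.1.val = (w.1.val + 1) % n)))) Iff.rfl

/-- The ring (cycle) graph on `n` vertices: `i` is adjacent to `j` iff `j ≡ i ± 1 (mod n)`. -/
def ringGraph (n : ℕ) : SimpleGraph (Fin n) where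
  Adj i j := i ≠ j ∧ (j.val = (i.val + 1) % n ∨ i.val = (j.val + 1) % n)
  symm := by
    constructor
    rintro i j ⟨hne, h⟩
    exact ⟨fun h' => hne h'.symm, h.symm⟩
  loopless := ⟨fun v h => h.1 rfl⟩

instance (n : ℕ) : DecidableRel (ringGraph n).Adj := fun i j =>
  decidable_of_iff (i ≠ j ∧ (j.val = (i.val + 1) % n ∨ i.val = (j.val + 1) % n)) Iff.rfl

section
variable {V : Type*} [Fintype V] [DecidableEq V] (G : SimpleGraph V) [DecidableRel G.Adj]

lemma rowsum_lap (v : V) : ∑ w, G.lapMatrix ℝ v w = 0 := by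
  have h := congrFun (G.lapMatrix_mulVec_const_eq_zero (R := ℝ)) v
  simpa [mulVec, dotProduct] using h

lemma lap_offdiag {v w : V} (h : v ≠ w) :
    G.lapMatrix ℝ v w = -(if G.Adj v w then 1 else 0) := by
  simp [SimpleGraph.lapMatrix, SimpleGraph.degMatrix, diagonal, h, Matrix.sub_apply]

end

lemma offdiag_eq (n k : ℕ) (hn : 3 ≤ n) (hk : 2 ≤ k)
    (v w : Fin n × Fin k) (hvw : v ≠ w) :
    (ringClique n k).lapMatrix ℝ v w =
      ((1 : Matrix (Fin n) (Fin n) ℝ) ⊗ₖ ((⊤ : SimpleGraph (Fin k)).lapMatrix ℝ) +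
      (ringGraph n).lapMatrix ℝ ⊗ₖ
        Matrix.single (⟨0, lt_of_lt_of_le Nat.zero_lt_two hk⟩ : Fin k) (⟨0, lt_of_lt_of_le Nat.zero_lt_two hk⟩ : Fin k) (1 : ℝ)) v w := by
  obtain ⟨i, a⟩ := v
  obtain ⟨j, b⟩ := w
  rw [lap_offdiag _ hvw]
  rw [Matrix.add_apply, kroneckerMap_apply, kroneckerMap_apply]
  rcases eq_or_ne i j with hij | hij
  · subst hij
    have hab : a ≠ b := fun h => hvw (by rw [h])
    have : (ringClique n k).Adj (i, a) (i, b) := ⟨hvw, Or.inl rfl⟩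
    rw [if_pos this, lap_offdiag _ hab]
    have htop : (⊤ : SimpleGraph (Fin k)).Adj a b := hab
    rw [if_pos htop]
    simp [Matrix.single, Matrix.one_apply, Fin.ext_iff]
    intro h1 h2
    exact absurd (Fin.ext (h1.symm.trans h2) : a = b) hab
  · have h1 : (1 : Matrix (Fin n) (Fin n) ℝ) i j = 0 := Matrix.one_apply_ne hij
    rw [h1, zero_mul, zero_add, lap_offdiag _ hij]
    have hadj : (ringClique n k).Adj (i, a) (j, b) ↔
        (a.val = 0 ∧ b.val = 0 ∧ (j.val = (i.val + 1) % n ∨ i.val = (j.val + 1) % n)) := by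
      constructor
      · rintro ⟨-, h | h⟩
        · exact absurd h hij
        · exact h
      · intro h
        exact ⟨hvw, Or.inr h⟩
    have hr : (ringGraph n).Adj i j ↔
        (j.val = (i.val + 1) % n ∨ i.val = (j.val + 1) % n) := by
      constructor
      · rintro ⟨-, h⟩; exact h
      · intro h; exact ⟨hij, h⟩
    simp only [hadj, hr, Matrix.single, of_apply]
    by_cases hc : (j.val = (i.val + 1) % n ∨ i.val = (j.val + 1) % n) <;>
      by_cases ha : a.val = 0 <;> by_cases hb : b.val = 0 <;>
      simp_all [Fin.ext_iff, eq_comm]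

theorem lapMatrix_ringClique_decomp (n k : ℕ) (hn : 3 ≤ n) (hk : 2 ≤ k) :
    (ringClique n k).lapMatrix ℝ =
      (1 : Matrix (Fin n) (Fin n) ℝ) ⊗ₖ ((⊤ : SimpleGraph (Fin k)).lapMatrix ℝ) +
      (ringGraph n).lapMatrix ℝ ⊗ₖ
        Matrix.single (⟨0, by omega⟩ : Fin k) (⟨0, by omega⟩ : Fin k) (1 : ℝ) := by
  set R := (1 : Matrix (Fin n) (Fin n) ℝ) ⊗ₖ ((⊤ : SimpleGraph (Fin k)).lapMatrix ℝ) +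
      (ringGraph n).lapMatrix ℝ ⊗ₖ
        Matrix.single (⟨0, by omega⟩ : Fin k) (⟨0, by omega⟩ : Fin k) (1 : ℝ) with hR
  have hrowR : ∀ v, ∑ w, R v w = 0 := by
    rintro ⟨i, a⟩
    rw [Fintype.sum_prod_type]
    have inner : ∀ j, ∑ b, R (i, a) (j, b) =
        (ringGraph n).lapMatrix ℝ i j *
          (∑ b, Matrix.single (⟨0, by omega⟩ : Fin k) (⟨0, by omega⟩ : Fin k) (1 : ℝ) a b) := by
      intro j
      simp only [hR, Matrix.add_apply, kroneckerMap_apply]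
      rw [Finset.sum_add_distrib, ← Finset.mul_sum]
      have : ∀ b : Fin k, (1 : Matrix (Fin n) (Fin n) ℝ) (i, a).1 (j, b).1 *
          (⊤ : SimpleGraph (Fin k)).lapMatrix ℝ a b =
          (1 : Matrix (Fin n) (Fin n) ℝ) i j * (⊤ : SimpleGraph (Fin k)).lapMatrix ℝ a b :=
        fun b => rfl
      simp_rw [this]
      rw [← Finset.mul_sum, rowsum_lap, mul_zero, zero_add]
    simp_rw [inner]
    rw [← Finset.sum_mul, rowsum_lap, zero_mul]
  ext v w
  by_cases hvw : v = w
  · subst hvw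
    have h1 : ∑ x ∈ Finset.univ.erase v, (ringClique n k).lapMatrix ℝ v x +
        (ringClique n k).lapMatrix ℝ v v = ∑ x, (ringClique n k).lapMatrix ℝ v x :=
      Finset.sum_erase_add _ _ (Finset.mem_univ v)
    have h2 : ∑ x ∈ Finset.univ.erase v, R v x + R v v = ∑ x, R v x :=
      Finset.sum_erase_add _ _ (Finset.mem_univ v)
    have h3 : ∑ x ∈ Finset.univ.erase v, (ringClique n k).lapMatrix ℝ v x =
        ∑ x ∈ Finset.univ.erase v, R v x := by
      refine Finset.sum_congr rfl fun x hx => ?_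
      exact offdiag_eq n k hn hk v x (Ne.symm (Finset.ne_of_mem_erase hx))
    rw [rowsum_lap] at h1
    rw [hrowR] at h2
    linarith [h1, h2, h3]
  · exact offdiag_eq n k hn hk v w hvw
end

section
/- Let M be a real symmetric n×n matrix with eigenvalues λ_1, …, λ_n (listed with multiplicity), and let A and B be real symmetric k×k matrices. Then the set of eigenvalues of the nk×nk matrix I_n ⊗ A + M ⊗ B equals the union ∪_{i=1}^n Λ(A + λ_i B). -/
open Matrix Kronecker

/-- The set of (real) eigenvalues of a matrix. -/
def eigSet {N : Type*} [Fintype N] (A : Matrix N N ℝ) : Set ℝ :=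
  {μ | ∃ x : N → ℝ, x ≠ 0 ∧ A.mulVec x = μ • x}

private lemma kron_mulVec_pure {n k : ℕ} (C : Matrix (Fin n) (Fin n) ℝ)
    (D : Matrix (Fin k) (Fin k) ℝ)
    (u : Fin n → ℝ) (w : Fin k → ℝ) (p : Fin n) (j : Fin k) :
    ((C ⊗ₖ D) *ᵥ fun q : Fin n × Fin k => u q.1 * w q.2) (p, j) = (C *ᵥ u) p * (D *ᵥ w) j := by
  simp only [mulVec, dotProduct, kroneckerMap_apply, Fintype.sum_prod_type,
    Finset.sum_mul, Finset.mul_sum]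
  rw [Finset.sum_comm]
  exact Finset.sum_congr rfl fun j' _ => Finset.sum_congr rfl fun p' _ => by ring

private lemma kron_pair {n k : ℕ} (C : Matrix (Fin n) (Fin n) ℝ) (D : Matrix (Fin k) (Fin k) ℝ)
    (u : Fin n → ℝ) (z : Fin n × Fin k → ℝ) (j : Fin k) :
    ∑ p, u p * ((C ⊗ₖ D) *ᵥ z) (p, j)
      = (D *ᵥ fun j' => ∑ p, (C.vecMul u) p * z (p, j')) j := by
  simp only [mulVec, vecMul, dotProduct, kroneckerMap_apply, Fintype.sum_prod_type,
    Finset.mul_sum, Finset.sum_mul]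
  conv_lhs => enter [2, p]; rw [Finset.sum_comm]
  rw [Finset.sum_comm]
  refine Finset.sum_congr rfl fun j' _ => ?_
  rw [Finset.sum_comm]
  exact Finset.sum_congr rfl fun p' _ => Finset.sum_congr rfl fun p _ => by ring

theorem eigSet_kronecker_sum {n k : ℕ} (M : Matrix (Fin n) (Fin n) ℝ)
    (hM : M.IsHermitian) (A B : Matrix (Fin k) (Fin k) ℝ)
    (hA : A.IsHermitian) (hB : B.IsHermitian) :
    eigSet ((1 : Matrix (Fin n) (Fin n) ℝ) ⊗ₖ A + M ⊗ₖ B) =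
      ⋃ i : Fin n, eigSet (A + hM.eigenvalues i • B) := by
  set b := hM.eigenvectorBasis with hb
  set v : Fin n → Fin n → ℝ := fun i p => b i p with hv
  have hbv : ∀ i, M *ᵥ v i = hM.eigenvalues i • v i := fun i =>
    hM.mulVec_eigenvectorBasis i
  have hMT : Mᵀ = M := by
    have := hM.eq
    rwa [conjTranspose_eq_transpose_of_trivial] at this
  have hvM : ∀ i, M.vecMul (v i) = hM.eigenvalues i • v i := by
    intro i
    have h := vecMul_transpose M (v i)
    rw [hMT] at h
    rw [h, hbv i]
  ext μ
  simp only [Set.mem_iUnion, eigSet, Set.mem_setOf_eq]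
  constructor
  · rintro ⟨z, hz, hzeq⟩
    set x : Fin n → Fin k → ℝ := fun i j => ∑ p, v i p * z (p, j) with hx
    have key : ∀ i, (A + hM.eigenvalues i • B) *ᵥ (x i) = μ • (x i) := by
      intro i
      funext j
      have h1 : ∑ p, v i p * ((((1 : Matrix (Fin n) (Fin n) ℝ) ⊗ₖ A + M ⊗ₖ B)) *ᵥ z) (p, j)
          = ((A + hM.eigenvalues i • B) *ᵥ (x i)) j := by
        simp only [add_mulVec, Pi.add_apply, mul_add, Finset.sum_add_distrib]
        rw [kron_pair, kron_pair, vecMul_one, hvM i]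
        congr 1
        simp only [mulVec, dotProduct, Pi.smul_apply, smul_eq_mul, Matrix.smul_apply, hx]
        refine Finset.sum_congr rfl fun j' _ => ?_
        rw [Finset.mul_sum, Finset.mul_sum]
        exact Finset.sum_congr rfl fun p _ => by ring
      rw [hzeq] at h1
      rw [← h1]
      simp only [Pi.smul_apply, smul_eq_mul, hx, Finset.mul_sum]
      exact Finset.sum_congr rfl fun p _ => by ring
    have hex : ∃ i, x i ≠ 0 := by
      by_contra hall
      push_neg at hall
      apply hz
      funext q
      obtain ⟨p, j⟩ := q
      have hinner : ∀ i, @inner ℝ _ _ (b i)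
          (show EuclideanSpace ℝ (Fin n) from WithLp.toLp 2 fun p => z (p, j)) = 0 := by
        intro i
        have h2 : @inner ℝ _ _ (b i)
            (show EuclideanSpace ℝ (Fin n) from WithLp.toLp 2 fun p => z (p, j))
            = ∑ p, v i p * z (p, j) := by
          simp [PiLp.inner_apply, RCLike.inner_apply, hv, mul_comm]
        rw [h2]
        exact congrFun (hall i) j
      have h0 : (show EuclideanSpace ℝ (Fin n) from WithLp.toLp 2 fun p => z (p, j)) = 0 := by
        apply b.repr.map_eq_zero_iff.mp
        refine PiLp.ext fun i => ?_
        rw [b.repr_apply_apply, hinner i]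
        rfl
      exact congrArg (fun w : EuclideanSpace ℝ (Fin n) => w p) h0
    obtain ⟨i, hxi⟩ := hex
    exact ⟨i, x i, hxi, key i⟩
  · rintro ⟨i, x, hx, hxeq⟩
    have hvne : v i ≠ 0 := by
      intro h0
      exact b.orthonormal.ne_zero i (by ext p; exact congrFun h0 p)
    obtain ⟨p0, hp0⟩ := Function.ne_iff.mp hvne
    obtain ⟨j0, hj0⟩ := Function.ne_iff.mp hx
    refine ⟨fun q => v i q.1 * x q.2, ?_, ?_⟩
    · intro h0
      have := congrFun h0 (p0, j0)
      simp only [Pi.zero_apply] at this hp0 hj0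
      exact hj0 ((mul_eq_zero.mp this).resolve_left hp0)
    · funext q
      obtain ⟨p, j⟩ := q
      simp only [add_mulVec, Pi.add_apply]
      rw [kron_mulVec_pure, kron_mulVec_pure, one_mulVec, hbv i]
      have hthis := congrFun hxeq j
      simp only [add_mulVec, smul_mulVec, Pi.add_apply, Pi.smul_apply,
        smul_eq_mul] at hthis
      simp only [Pi.smul_apply, smul_eq_mul]
      linear_combination v i p * hthis
end

section
/- For every integer k ≥ 2, the multiset of eigenvalues of the Laplacian L(G_cr(k)) of the crown graph (a (k+2)×(k+2) matrix) consists of 0, k+2, the value 1 with multiplicity 2, and the value k with multiplicity k−2. Equivalently, det(L(G_cr(k)) − xI_{k+2}) = (−1)^k · x · (x − (k+2)) · (x − 1)² · (x − k)^{k−2} for all real x. -/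
open Matrix Polynomial
open Finset

/-- The crown graph `G_cr(k)` on `k + 2` vertices: the vertices `0, …, k-1` form a
clique, and each of the two extra vertices `k`, `k+1` is adjacent to vertex `0` only. -/
def crownGraph (k : ℕ) : SimpleGraph (Fin (k + 2)) where
  Adj v w := v ≠ w ∧
    ((v.val < k ∧ w.val < k) ∨ (k ≤ v.val ∧ w.val = 0) ∨ (k ≤ w.val ∧ v.val = 0))
  symm := ⟨by
    rintro v w ⟨hne, h⟩
    exact ⟨fun h' => hne h'.symm, by tauto⟩⟩
  loopless := ⟨fun v h => h.1 rfl⟩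

instance (k : ℕ) : DecidableRel (crownGraph k).Adj := fun v w =>
  decidable_of_iff (v ≠ w ∧
    ((v.val < k ∧ w.val < k) ∨ (k ≤ v.val ∧ w.val = 0) ∨ (k ≤ w.val ∧ v.val = 0))) Iff.rfl

lemma crown_adj (k : ℕ) (v w : Fin (k+2)) : (crownGraph k).Adj v w ↔ (v ≠ w ∧
    ((v.val < k ∧ w.val < k) ∨ (k ≤ v.val ∧ w.val = 0) ∨ (k ≤ w.val ∧ v.val = 0))) := Iff.rfl

lemma filter_lt_card (k : ℕ) : (univ.filter (fun w : Fin (k+2) => w.val < k)).card = k := by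
  have : (univ.filter (fun w : Fin (k+2) => w.val < k)) = Finset.map (Fin.castAddEmb 2) univ := by
    ext w
    simp only [mem_filter, mem_univ, true_and, Finset.mem_map, Fin.castAddEmb]
    constructor
    · intro h; exact ⟨⟨w.val, h⟩, by simp [Fin.castAdd, Fin.ext_iff]⟩
    · rintro ⟨i, rfl⟩; simpa using i.isLt
  rw [this, Finset.card_map, card_univ, Fintype.card_fin]

lemma deg_zero (k : ℕ) (hk : 2 ≤ k) (v : Fin (k+2)) (hv : v.val = 0) :
    (crownGraph k).degree v = k + 1 := by
  rw [SimpleGraph.degree, SimpleGraph.neighborFinset_eq_filter]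
  have : (univ.filter ((crownGraph k).Adj v)) = univ.erase v := by
    ext w
    have hw := w.isLt
    simp only [mem_filter, mem_univ, true_and, mem_erase, and_true, crown_adj, ne_eq,
      Fin.ext_iff]
    omega
  rw [this, card_erase_of_mem (mem_univ v), card_univ, Fintype.card_fin]
  omega

lemma deg_mid (k : ℕ) (v : Fin (k+2)) (h0 : v.val ≠ 0) (h : v.val < k) :
    (crownGraph k).degree v = k - 1 := by
  rw [SimpleGraph.degree, SimpleGraph.neighborFinset_eq_filter]
  have : (univ.filter ((crownGraph k).Adj v)) =
      (univ.filter (fun w : Fin (k+2) => w.val < k)).erase v := by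
    ext w
    have hw := w.isLt
    simp only [mem_filter, mem_univ, true_and, mem_erase, crown_adj, ne_eq, Fin.ext_iff]
    omega
  rw [this, card_erase_of_mem (by simp [h]), filter_lt_card]

lemma deg_out (k : ℕ) (hk : 2 ≤ k) (v : Fin (k+2)) (h : k ≤ v.val) :
    (crownGraph k).degree v = 1 := by
  rw [SimpleGraph.degree, SimpleGraph.neighborFinset_eq_filter]
  have : (univ.filter ((crownGraph k).Adj v)) = {⟨0, by omega⟩} := by
    ext w
    have hw := w.isLt
    simp only [mem_filter, mem_univ, true_and, Finset.mem_singleton, crown_adj, ne_eq, Fin.ext_iff]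
    omega
  rw [this, Finset.card_singleton]

lemma lap_sub_apply (k : ℕ) (x : ℝ) (v w : Fin (k+2)) :
    ((crownGraph k).lapMatrix ℝ - x • 1) v w =
      (if v = w then ((crownGraph k).degree v : ℝ) - x else 0) -
        (if (crownGraph k).Adj v w then 1 else 0) := by
  simp only [SimpleGraph.lapMatrix, SimpleGraph.degMatrix, Matrix.sub_apply, Matrix.smul_apply,
    Matrix.diagonal_apply, SimpleGraph.adjMatrix_apply, Matrix.one_apply, smul_eq_mul]
  split_ifs <;> ring

lemma crown_det (k : ℕ) (hk : 2 ≤ k) (x : ℝ) (h1 : (1:ℝ) - x ≠ 0) (ha0 : (k:ℝ) - x ≠ 0) :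
    ((crownGraph k).lapMatrix ℝ - x • 1).det =
      (1-x)^2 * ((k:ℝ)-x)^(k-2) * (x * (x - ((k:ℝ)+2))) := by
  set a : ℝ := (k:ℝ) - x with ha'
  set z : Fin k := ⟨0, by omega⟩ with hz
  set A : Matrix (Fin k) (Fin k) ℝ := Matrix.of (fun i j =>
    if i = j then (if i = z then (k:ℝ)+1-x else (k:ℝ)-1-x) else -1) with hA
  set B : Matrix (Fin k) (Fin 2) ℝ := Matrix.of (fun i _ => if i = z then (-1:ℝ) else 0) with hB
  set Cm : Matrix (Fin 2) (Fin k) ℝ := Matrix.of (fun _ j => if j = z then (-1:ℝ) else 0) with hCm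
  set D : Matrix (Fin 2) (Fin 2) ℝ := (1-x) • 1 with hD
  have h0 : ((crownGraph k).lapMatrix ℝ - x • 1).det = (Matrix.fromBlocks A B Cm D).det := by
    rw [← Matrix.det_submatrix_equiv_self finSumFinEquiv]
    congr 1
    ext i j
    rcases i with i | i <;> rcases j with j | j <;>
      simp only [Matrix.submatrix_apply, finSumFinEquiv_apply_left, finSumFinEquiv_apply_right,
        Matrix.fromBlocks_apply₁₁, Matrix.fromBlocks_apply₁₂, Matrix.fromBlocks_apply₂₁,
        Matrix.fromBlocks_apply₂₂, lap_sub_apply, hA, hB, hCm, hD, Matrix.of_apply]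
    · -- inl inl
      by_cases h : i = j
      · subst h
        rw [if_pos rfl, if_neg ((crownGraph k).irrefl), if_pos rfl, sub_zero]
        by_cases hi0 : i = z
        · have : (Fin.castAdd 2 i).val = 0 := by rw [hi0]; rfl
          rw [if_pos hi0, deg_zero k hk _ this]
          push_cast; ring
        · have hv0 : (Fin.castAdd 2 i).val ≠ 0 := by
            simp only [Fin.coe_castAdd]
            intro hh; exact hi0 (by simp [hz, Fin.ext_iff, hh])
          rw [if_neg hi0, deg_mid k _ hv0 (by simpa using i.isLt)]
          rw [Nat.cast_sub (by omega)]
          push_cast; ring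
      · have hne : Fin.castAdd 2 i ≠ Fin.castAdd 2 j := by
          intro hh; exact h (by simpa [Fin.ext_iff] using hh)
        have hadj : (crownGraph k).Adj (Fin.castAdd 2 i) (Fin.castAdd 2 j) :=
          ⟨hne, Or.inl ⟨by simpa using i.isLt, by simpa using j.isLt⟩⟩
        rw [if_neg hne, if_pos hadj, if_neg h]
        norm_num
    · -- inl inr
      have hne : Fin.castAdd 2 i ≠ Fin.natAdd k j := by
        have := i.isLt
        simp only [ne_eq, Fin.ext_iff, Fin.coe_castAdd, Fin.coe_natAdd]
        omega
      rw [if_neg hne]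
      by_cases hi0 : i = z
      · have hadj : (crownGraph k).Adj (Fin.castAdd 2 i) (Fin.natAdd k j) :=
          ⟨hne, Or.inr (Or.inr ⟨Nat.le_add_right k j, by rw [hi0]; rfl⟩)⟩
        rw [if_pos hadj, if_pos hi0]
        norm_num
      · have hnadj : ¬ (crownGraph k).Adj (Fin.castAdd 2 i) (Fin.natAdd k j) := by
          rintro ⟨-, h'⟩
          simp only [Fin.coe_castAdd, Fin.coe_natAdd] at h'
          have hi := i.isLt
          have : i.val = 0 := by omega
          exact hi0 (by simp [hz, Fin.ext_iff, this])
        rw [if_neg hnadj, if_neg hi0]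
        norm_num
    · -- inr inl
      have hne : Fin.natAdd k i ≠ Fin.castAdd 2 j := by
        have := j.isLt
        simp only [ne_eq, Fin.ext_iff, Fin.coe_castAdd, Fin.coe_natAdd]
        omega
      rw [if_neg hne]
      by_cases hj0 : j = z
      · have hadj : (crownGraph k).Adj (Fin.natAdd k i) (Fin.castAdd 2 j) :=
          ⟨hne, Or.inr (Or.inl ⟨Nat.le_add_right k i, by rw [hj0]; rfl⟩)⟩
        rw [if_pos hadj, if_pos hj0]
        norm_num
      · have hnadj : ¬ (crownGraph k).Adj (Fin.natAdd k i) (Fin.castAdd 2 j) := by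
          rintro ⟨-, h'⟩
          simp only [Fin.coe_castAdd, Fin.coe_natAdd] at h'
          have hj := j.isLt
          have : j.val = 0 := by omega
          exact hj0 (by simp [hz, Fin.ext_iff, this])
        rw [if_neg hnadj, if_neg hj0]
        norm_num
    · -- inr inr
      have hnadj : ¬ (crownGraph k).Adj (Fin.natAdd k i) (Fin.natAdd k j) := by
        rintro ⟨-, h'⟩
        simp only [Fin.coe_natAdd] at h'
        omega
      rw [if_neg hnadj]
      by_cases h : i = j
      · subst h
        rw [if_pos rfl, deg_out k hk _ (Nat.le_add_right k i)]
        simp only [Matrix.smul_apply, Matrix.one_apply, if_pos rfl, smul_eq_mul]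
        push_cast; ring
      · have hne : Fin.natAdd k i ≠ Fin.natAdd k j := by
          intro hh; exact h (by simpa [Fin.ext_iff] using hh)
        rw [if_neg hne]
        simp only [Matrix.smul_apply, Matrix.one_apply, if_neg h, smul_eq_mul]
        ring
  rw [h0]
  have hDr : D * ((1-x)⁻¹ • 1) = 1 := by
    rw [hD, Matrix.smul_mul, Matrix.mul_smul, smul_smul, mul_inv_cancel₀ h1, one_smul,
      Matrix.one_mul]
  haveI hinv : Invertible D := invertibleOfRightInverse D _ hDr
  have hinvD : (⅟D : Matrix (Fin 2) (Fin 2) ℝ) = (1-x)⁻¹ • 1 := invOf_eq_right_inv hDr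
  rw [Matrix.det_fromBlocks₂₂, hinvD]
  set U : Matrix (Fin k) (Fin 2) ℝ := Matrix.of (fun i l =>
    if l = 0 then -1 else (if i = z then 2 - 2*(1-x)⁻¹ else 0)) with hU
  set V : Matrix (Fin 2) (Fin k) ℝ := Matrix.of (fun l j =>
    if l = 0 then 1 else (if j = z then 1 else 0)) with hV
  have e1 : B * ((1-x)⁻¹ • (1 : Matrix (Fin 2) (Fin 2) ℝ)) * Cm = (1-x)⁻¹ • (B * Cm) := by
    rw [Matrix.mul_smul, Matrix.mul_one, Matrix.smul_mul]
  have e2 : U * (a⁻¹ • V) = a⁻¹ • (U * V) := by rw [Matrix.mul_smul]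
  have hS : A - B * ((1-x)⁻¹ • (1 : Matrix (Fin 2) (Fin 2) ℝ)) * Cm
      = a • ((1 : Matrix (Fin k) (Fin k) ℝ) + U * (a⁻¹ • V)) := by
    rw [e1, e2]
    ext i j
    simp only [Matrix.sub_apply, Matrix.add_apply, Matrix.smul_apply, Matrix.mul_apply,
      Matrix.one_apply, Fin.sum_univ_two, hA, hB, hCm, hU, hV, Matrix.of_apply, smul_eq_mul]
    by_cases hij : i = j
    · subst hij
      by_cases hi0 : i = z
      · simp only [hi0, if_pos rfl]
        simp only [if_true, if_false, one_ne_zero]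
        field_simp
        ring
      · simp only [if_pos rfl, if_neg hi0]
        simp only [if_true, if_false, one_ne_zero]
        field_simp
        ring
    · by_cases hi0 : i = z <;> by_cases hj0 : j = z
      · exact absurd (hi0.trans hj0.symm) hij
      · simp only [if_neg hij, if_pos hi0, if_neg hj0]
        simp only [if_true, if_false, one_ne_zero]
        field_simp
        ring
      · simp only [if_neg hij, if_neg hi0, if_pos hj0]
        simp only [if_true, if_false, one_ne_zero]
        field_simp
        ring
      · simp only [if_neg hij, if_neg hi0, if_neg hj0]
        simp only [if_true, if_false, one_ne_zero]
        field_simp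
        ring
  rw [hS, Matrix.det_smul, Matrix.det_smul, Matrix.det_one, Matrix.det_one_add_mul_comm]
  have hVU : ((a⁻¹ • V) * U) = Matrix.of (fun l m : Fin 2 =>
      if l = 0 then (if m = 0 then a⁻¹ * (-(k:ℝ)) else a⁻¹ * (2 - 2*(1-x)⁻¹))
      else (if m = 0 then a⁻¹ * (-1) else a⁻¹ * (2 - 2*(1-x)⁻¹))) := by
    ext l m
    simp only [Matrix.mul_apply, Matrix.smul_apply, hU, hV, Matrix.of_apply, smul_eq_mul]
    fin_cases l <;> fin_cases m <;>
      simp [← Finset.mul_sum, Finset.sum_ite_eq', Finset.card_univ, mul_comm]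
  rw [hVU, Matrix.det_fin_two]
  simp only [Matrix.add_apply, Matrix.one_apply, Matrix.of_apply, Fintype.card_fin,
    if_pos rfl, Fin.zero_eta, Fin.mk_one, one_ne_zero, zero_ne_one, if_false, if_true, mul_one]
  have hk2 : a ^ k = a ^ (k-2) * a ^ 2 := by
    rw [← pow_add]; congr 1; omega
  rw [hk2]
  field_simp
  ring


lemma charpoly_eval (n : ℕ) (M : Matrix (Fin n) (Fin n) ℝ) (x : ℝ) :
    (M.charpoly).eval x = (x • (1 : Matrix (Fin n) (Fin n) ℝ) - M).det := by
  rw [Matrix.charpoly, ← Polynomial.coe_evalRingHom, RingHom.map_det]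
  congr 1
  ext i j
  by_cases h : i = j
  · subst h
    simp [Matrix.charmatrix_apply_eq, Matrix.one_apply]
  · simp [Matrix.charmatrix_apply_ne _ _ _ h, Matrix.one_apply, h]

theorem eigenvalues_crownGraph (k : ℕ) (hk : 2 ≤ k) :
    Matrix.charpoly ((crownGraph k).lapMatrix ℝ) =
      X * (X - C ((k : ℝ) + 2)) * (X - C 1) ^ 2 * (X - C (k : ℝ)) ^ (k - 2) ∧
    ∀ x : ℝ, ((crownGraph k).lapMatrix ℝ - x • (1 : Matrix (Fin (k + 2)) (Fin (k + 2)) ℝ)).det =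
      (-1 : ℝ) ^ k * x * (x - ((k : ℝ) + 2)) * (x - 1) ^ 2 * (x - (k : ℝ)) ^ (k - 2) := by
  set L := (crownGraph k).lapMatrix ℝ with hL
  set q : ℝ[X] := X * (X - C ((k : ℝ) + 2)) * (X - C 1) ^ 2 * (X - C (k : ℝ)) ^ (k - 2) with hq
  have hqeval : ∀ x : ℝ, q.eval x =
      x * (x - ((k:ℝ)+2)) * (x-1)^2 * (x-(k:ℝ))^(k-2) := by
    intro x
    simp [hq]
  have key : ∀ x : ℝ, x ≠ 1 → x ≠ (k:ℝ) → (L.charpoly).eval x = q.eval x := by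
    intro x hx1 hxk
    have h1 : (1:ℝ) - x ≠ 0 := sub_ne_zero.mpr (Ne.symm hx1)
    have ha : (k:ℝ) - x ≠ 0 := sub_ne_zero.mpr (Ne.symm hxk)
    rw [charpoly_eval, hqeval]
    have hneg : x • (1 : Matrix (Fin (k + 2)) (Fin (k + 2)) ℝ) - L = -(L - x • 1) :=
      (neg_sub _ _).symm
    rw [hneg, Matrix.det_neg, Fintype.card_fin, crown_det k hk x h1 ha]
    have h2 : ((1:ℝ)-x)^2 = (x-1)^2 := by ring
    have h3 : ((k:ℝ)-x)^(k-2) = (-1:ℝ)^(k-2) * (x-(k:ℝ))^(k-2) := by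
      rw [← neg_sub x (k:ℝ), neg_pow]
    have h4 : ((-1:ℝ))^(k+2) * (-1:ℝ)^(k-2) = 1 := by
      rw [← pow_add]
      have : k + 2 + (k - 2) = 2 * k := by omega
      rw [this, pow_mul]
      norm_num
    calc (-1:ℝ)^(k+2) * (((1:ℝ)-x)^2 * ((k:ℝ)-x)^(k-2) * (x * (x - ((k:ℝ)+2))))
        = ((-1:ℝ)^(k+2) * (-1:ℝ)^(k-2)) * ((x-1)^2 * (x-(k:ℝ))^(k-2) * (x * (x - ((k:ℝ)+2)))) := by
          rw [h3, h2]; ring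
      _ = x * (x - ((k:ℝ)+2)) * (x-1)^2 * (x-(k:ℝ))^(k-2) := by rw [h4]; ring
  have hp : L.charpoly = q := by
    have hsub : L.charpoly - q = 0 := by
      apply Polynomial.eq_zero_of_infinite_isRoot
      have hfin : ({1, (k:ℝ)} : Set ℝ).Finite := (Set.finite_singleton _).insert _
      apply Set.Infinite.mono (s := ({1, (k:ℝ)}ᶜ : Set ℝ)) ?_ hfin.infinite_compl
      intro y hy
      simp only [Set.mem_compl_iff, Set.mem_insert_iff, Set.mem_singleton_iff, not_or] at hy
      simp only [Set.mem_setOf_eq, Polynomial.IsRoot, Polynomial.eval_sub,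
        key y hy.1 hy.2, sub_self]
    exact sub_eq_zero.mp hsub
  refine ⟨hp, fun x => ?_⟩
  have hneg : L - x • (1 : Matrix (Fin (k + 2)) (Fin (k + 2)) ℝ) = -(x • 1 - L) :=
    (neg_sub _ _).symm
  rw [hneg, Matrix.det_neg, Fintype.card_fin, ← charpoly_eval, hp, hqeval]
  ring
end

section
/- For every integer k ≥ 2, the Laplacian of the crown graph satisfies λ_max(L(G_cr(k))) = k + 2 and λ_min^+(L(G_cr(k))) = 1; hence its condition number is χ(L(G_cr(k))) = k + 2. -/
open Matrix

/-- The largest eigenvalue of a matrix. -/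
noncomputable def lamMax {N : Type*} [Fintype N] (A : Matrix N N ℝ) : ℝ :=
  sSup (eigSet A)

/-- The smallest positive eigenvalue of a matrix. -/
noncomputable def lamMinPos {N : Type*} [Fintype N] (A : Matrix N N ℝ) : ℝ :=
  sInf {μ ∈ eigSet A | 0 < μ}

/-- The condition number `χ(A) = λ_max(A) / λ_min^+(A)`. -/
noncomputable def chi {N : Type*} [Fintype N] (A : Matrix N N ℝ) : ℝ :=
  lamMax A / lamMinPos A

namespace CrownAux

open SimpleGraph Finset

variable (k : ℕ)

/-- The clique part of the vertex set. -/
def F : Finset (Fin (k + 2)) := Finset.univ.filter (fun j => j.val < k)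

lemma mem_F (j : Fin (k+2)) : j ∈ F k ↔ j.val < k := by simp [F]

lemma card_F : (F k).card = k := by
  have h : F k = Finset.Iio (⟨k, by omega⟩ : Fin (k+2)) := by
    ext j; simp [F, Fin.lt_def]
  rw [h, Fin.card_Iio]

lemma crown_adj (v w : Fin (k+2)) : (crownGraph k).Adj v w ↔ v ≠ w ∧
    ((v.val < k ∧ w.val < k) ∨ (k ≤ v.val ∧ w.val = 0) ∨ (k ≤ w.val ∧ v.val = 0)) := Iff.rfl

lemma z_mem_F (hk : 2 ≤ k) : (⟨0, by omega⟩ : Fin (k+2)) ∈ F k := by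
  simp only [mem_F]; omega

lemma card_F_erase (hk : 2 ≤ k) : ((F k).erase ⟨0, by omega⟩).card = k - 1 := by
  rw [Finset.card_erase_of_mem (z_mem_F k hk), card_F]

lemma sum_univ_split (x : Fin (k+2) → ℝ) :
    ∑ j, x j = (∑ j ∈ F k, x j) + x ⟨k, by omega⟩ + x ⟨k+1, by omega⟩ := by
  rw [← Finset.sum_filter_add_sum_filter_not Finset.univ (fun j => j.val < k) x]
  have h : Finset.univ.filter (fun j : Fin (k+2) => ¬ j.val < k)
      = {⟨k, by omega⟩, ⟨k+1, by omega⟩} := by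
    ext j
    simp only [Finset.mem_filter, Finset.mem_univ, true_and, Finset.mem_insert,
      Finset.mem_singleton, not_lt, Fin.ext_iff]
    have := j.isLt
    omega
  rw [h, Finset.sum_pair (by simp [Fin.ext_iff])]
  simp only [F, add_assoc]

lemma mv_last (hk : 2 ≤ k) (x : Fin (k+2) → ℝ) (v : Fin (k+2)) (hv : k ≤ v.val) :
    ((crownGraph k).lapMatrix ℝ *ᵥ x) v = x v - x ⟨0, by omega⟩ := by
  rw [lapMatrix_mulVec_apply]
  have hnf : (crownGraph k).neighborFinset v = {⟨0, by omega⟩} := by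
    ext u
    simp only [mem_neighborFinset, crown_adj, Finset.mem_singleton, Fin.ext_iff, ne_eq]
    omega
  rw [SimpleGraph.degree, hnf]
  simp

lemma mv_zero (hk : 2 ≤ k) (x : Fin (k+2) → ℝ) :
    ((crownGraph k).lapMatrix ℝ *ᵥ x) ⟨0, by omega⟩
      = (k + 2) * x ⟨0, by omega⟩ - ∑ j, x j := by
  rw [lapMatrix_mulVec_apply]
  have hnf : (crownGraph k).neighborFinset ⟨0, by omega⟩ =
      Finset.univ.erase ⟨0, by omega⟩ := by
    ext u
    simp only [mem_neighborFinset, crown_adj, Finset.mem_erase, Finset.mem_univ, and_true,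
      Fin.ext_iff, ne_eq]
    have := u.isLt
    omega
  rw [SimpleGraph.degree, hnf, Finset.sum_erase_eq_sub (Finset.mem_univ _),
    Finset.card_erase_of_mem (Finset.mem_univ _), Finset.card_univ, Fintype.card_fin]
  push_cast [Nat.add_sub_cancel]
  ring

lemma mv_mid (hk : 2 ≤ k) (x : Fin (k+2) → ℝ) (v : Fin (k+2))
    (hv : v.val < k) (hv0 : v.val ≠ 0) :
    ((crownGraph k).lapMatrix ℝ *ᵥ x) v = k * x v - ∑ j ∈ F k, x j := by
  rw [lapMatrix_mulVec_apply]
  have hvF : v ∈ F k := by simp [mem_F, hv]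
  have hnf : (crownGraph k).neighborFinset v = (F k).erase v := by
    ext u
    simp only [mem_neighborFinset, crown_adj, F, Finset.mem_erase, Finset.mem_filter,
      Finset.mem_univ, true_and, Fin.ext_iff, ne_eq]
    omega
  rw [SimpleGraph.degree, hnf, Finset.sum_erase_eq_sub hvF,
    Finset.card_erase_of_mem hvF, card_F]
  have h1 : ((k - 1 : ℕ) : ℝ) = (k : ℝ) - 1 := by
    have h : 1 ≤ k := by omega
    push_cast [h]; ring
  rw [h1]; ring

/-- Every eigenvalue of the crown graph Laplacian is `0`, `1`, `k` or `k+2`. -/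
lemma eig_cases (hk : 2 ≤ k) (μ : ℝ) (h : μ ∈ eigSet ((crownGraph k).lapMatrix ℝ)) :
    μ = 0 ∨ μ = 1 ∨ μ = (k : ℝ) ∨ μ = (k : ℝ) + 2 := by
  obtain ⟨x, hx0, hx⟩ := h
  by_contra hcon
  push_neg at hcon
  obtain ⟨h0, h1, hkk, hk2⟩ := hcon
  have h0' : μ ≠ 0 := h0
  have h1' : (1 : ℝ) - μ ≠ 0 := sub_ne_zero.mpr (Ne.symm h1)
  have hkk' : (k : ℝ) - μ ≠ 0 := sub_ne_zero.mpr (Ne.symm hkk)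
  have hk2' : μ - ((k : ℝ) + 2) ≠ 0 := sub_ne_zero.mpr hk2
  set z : Fin (k+2) := ⟨0, by omega⟩ with hz
  set p : Fin (k+2) := ⟨k, by omega⟩ with hpdef
  set q : Fin (k+2) := ⟨k+1, by omega⟩ with hqdef
  set S : ℝ := ∑ j ∈ F k, x j with hSdef
  set T : ℝ := ∑ j, x j with hTdef
  have heig : ∀ v, ((crownGraph k).lapMatrix ℝ *ᵥ x) v = μ * x v := by
    intro v; rw [hx]; simp
  have e0 : (k + 2) * x z - T = μ * x z := by
    rw [← heig z]; exact (mv_zero k hk x).symm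
  have ei : ∀ v : Fin (k+2), v.val < k → v.val ≠ 0 → (k : ℝ) * x v - S = μ * x v := by
    intro v hv hv0
    rw [← heig v]; exact (mv_mid k hk x v hv hv0).symm
  have ep : x p - x z = μ * x p := by
    rw [← heig p]; exact (mv_last k hk x p (le_refl k)).symm
  have eq' : x q - x z = μ * x q := by
    rw [← heig q]; exact (mv_last k hk x q (Nat.le_succ k)).symm
  have hT : T = S + x p + x q := sum_univ_split k x
  -- summing the middle equations
  have hsum : ((k : ℝ) - μ) * S = ((k : ℝ) - μ) * x z + ((k : ℝ) - 1) * S := by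
    have step : ∀ v ∈ (F k).erase z, ((k : ℝ) - μ) * x v = S := by
      intro v hv
      obtain ⟨hvz, hvF⟩ := Finset.mem_erase.mp hv
      have hvk : v.val < k := (mem_F k v).mp hvF
      have hv0 : v.val ≠ 0 := by
        intro hc
        exact hvz (by simp [hz, Fin.ext_iff, hc])
      have := ei v hvk hv0
      linarith
    have c1 : ((k : ℝ) - μ) * S = ∑ v ∈ F k, ((k : ℝ) - μ) * x v := by
      rw [hSdef, Finset.mul_sum]
    have c2 : ∑ v ∈ F k, ((k : ℝ) - μ) * x v
        = ((k : ℝ) - μ) * x z + ∑ v ∈ (F k).erase z, ((k : ℝ) - μ) * x v :=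
      (Finset.add_sum_erase _ _ (z_mem_F k hk)).symm
    have c3 : ∑ v ∈ (F k).erase z, ((k : ℝ) - μ) * x v = ((k : ℝ) - 1) * S := by
      rw [Finset.sum_congr rfl step, Finset.sum_const, card_F_erase k hk, nsmul_eq_mul]
      have h' : 1 ≤ k := by omega
      push_cast [h']
      ring
    rw [c1, c2, c3]
  have hS : (1 - μ) * S = ((k : ℝ) - μ) * x z := by linarith
  have hp : (1 - μ) * x p = x z := by linarith
  have hq : (1 - μ) * x q = x z := by linarith
  -- the key cancellation
  have key : μ * (μ - ((k : ℝ) + 2)) * x z = 0 := by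
    linear_combination (1 - μ) * e0 + hS + hp + hq + (1 - μ) * hT
  have hxz : x z = 0 := by
    rcases mul_eq_zero.mp key with h' | h'
    · rcases mul_eq_zero.mp h' with h'' | h''
      · exact absurd h'' h0'
      · exact absurd h'' hk2'
    · exact h'
  have hxp : x p = 0 := by
    have : (1 - μ) * x p = 0 := by rw [hp, hxz]
    rcases mul_eq_zero.mp this with h' | h'
    · exact absurd h' h1'
    · exact h'
  have hxq : x q = 0 := by
    have : (1 - μ) * x q = 0 := by rw [hq, hxz]
    rcases mul_eq_zero.mp this with h' | h'
    · exact absurd h' h1'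
    · exact h'
  have hSz : S = 0 := by
    have : (1 - μ) * S = 0 := by rw [hS, hxz, mul_zero]
    rcases mul_eq_zero.mp this with h' | h'
    · exact absurd h' h1'
    · exact h'
  apply hx0
  funext v
  show x v = 0
  by_cases hv : v.val < k
  · by_cases hv0 : v.val = 0
    · have : v = z := by simp [hz, Fin.ext_iff, hv0]
      rw [this]; exact hxz
    · have h' := ei v hv hv0
      rw [hSz] at h'
      have : ((k : ℝ) - μ) * x v = 0 := by linarith
      rcases mul_eq_zero.mp this with h'' | h''
      · exact absurd h'' hkk'
      · exact h''
  · have hvk : v.val = k ∨ v.val = k + 1 := by have := v.isLt; omega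
    rcases hvk with h' | h'
    · have : v = p := by simp [hpdef, Fin.ext_iff, h']
      rw [this]; exact hxp
    · have : v = q := by simp [hqdef, Fin.ext_iff, h']
      rw [this]; exact hxq

/-- `k + 2` is an eigenvalue. -/
lemma kp2_mem (hk : 2 ≤ k) : ((k : ℝ) + 2) ∈ eigSet ((crownGraph k).lapMatrix ℝ) := by
  refine ⟨fun i => if i.val = 0 then -(k : ℝ) - 1 else 1, ?_, ?_⟩
  · intro hc
    have := congrFun hc ⟨k, by omega⟩
    simp only [Pi.zero_apply] at this
    rw [if_neg (by omega)] at this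
    norm_num at this
  · set x : Fin (k+2) → ℝ := fun i => if i.val = 0 then -(k : ℝ) - 1 else 1 with hxdef
    have hxz : x ⟨0, by omega⟩ = -(k : ℝ) - 1 := by simp [hxdef]
    have hS : ∑ j ∈ F k, x j = -2 := by
      rw [← Finset.add_sum_erase _ _ (z_mem_F k hk), hxz]
      have step : ∀ v ∈ (F k).erase ⟨0, by omega⟩, x v = 1 := by
        intro v hv
        obtain ⟨hvz, _⟩ := Finset.mem_erase.mp hv
        have hv0 : v.val ≠ 0 := fun hc => hvz (by simp [Fin.ext_iff, hc])
        simp only [hxdef]; rw [if_neg hv0]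
      rw [Finset.sum_congr rfl step, Finset.sum_const, card_F_erase k hk, nsmul_eq_mul]
      have h' : 1 ≤ k := by omega
      push_cast [h']
      ring
    have hT : ∑ j, x j = 0 := by
      rw [sum_univ_split k x, hS]
      have h1 : x ⟨k, by omega⟩ = 1 := by
        simp only [hxdef]; rw [if_neg (by omega)]
      have h2 : x ⟨k+1, by omega⟩ = 1 := by
        simp only [hxdef]; rw [if_neg (by omega)]
      rw [h1, h2]; ring
    funext v
    simp only [Pi.smul_apply, smul_eq_mul]
    by_cases hv : v.val < k
    · by_cases hv0 : v.val = 0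
      · have hvz : v = ⟨0, by omega⟩ := by simp [Fin.ext_iff, hv0]
        rw [hvz, mv_zero k hk x, hT, hxz]
        ring
      · rw [mv_mid k hk x v hv hv0, hS]
        have : x v = 1 := by simp only [hxdef]; rw [if_neg hv0]
        rw [this]; ring
    · rw [mv_last k hk x v (by omega), hxz]
      have : x v = 1 := by
        have : v.val ≠ 0 := by omega
        simp only [hxdef]; rw [if_neg this]
      rw [this]; ring

/-- `1` is an eigenvalue. -/
lemma one_mem (hk : 2 ≤ k) : (1 : ℝ) ∈ eigSet ((crownGraph k).lapMatrix ℝ) := by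
  refine ⟨fun i => if i.val = k then 1 else if i.val = k + 1 then -1 else 0, ?_, ?_⟩
  · intro hc
    have := congrFun hc ⟨k, by omega⟩
    simp only [Pi.zero_apply, if_pos rfl] at this
    norm_num at this
  · set x : Fin (k+2) → ℝ :=
      fun i => if i.val = k then 1 else if i.val = k + 1 then -1 else 0 with hxdef
    have hxz : x ⟨0, by omega⟩ = 0 := by
      simp only [hxdef]
      rw [if_neg (by omega), if_neg (by omega)]
    have hS : ∑ j ∈ F k, x j = 0 := by
      apply Finset.sum_eq_zero
      intro v hv
      have hvk : v.val < k := (mem_F k v).mp hv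
      simp only [hxdef]
      rw [if_neg (by omega), if_neg (by omega)]
    have hT : ∑ j, x j = 0 := by
      rw [sum_univ_split k x, hS]
      have h1 : x ⟨k, by omega⟩ = 1 := by
        simp [hxdef]
      have h2 : x ⟨k+1, by omega⟩ = -1 := by
        simp [hxdef]
      rw [h1, h2]; ring
    funext v
    simp only [Pi.smul_apply, smul_eq_mul, one_mul]
    by_cases hv : v.val < k
    · by_cases hv0 : v.val = 0
      · have hvz : v = ⟨0, by omega⟩ := by simp [Fin.ext_iff, hv0]
        rw [hvz, mv_zero k hk x, hT, hxz]
        ring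
      · rw [mv_mid k hk x v hv hv0, hS]
        have : x v = 0 := by
          simp only [hxdef]
          rw [if_neg (by omega), if_neg (by omega)]
        rw [this]; ring
    · rw [mv_last k hk x v (by omega), hxz]
      ring

end CrownAux

theorem chi_crownGraph (k : ℕ) (hk : 2 ≤ k) :
    lamMax ((crownGraph k).lapMatrix ℝ) = (k : ℝ) + 2 ∧
    lamMinPos ((crownGraph k).lapMatrix ℝ) = 1 ∧
    chi ((crownGraph k).lapMatrix ℝ) = (k : ℝ) + 2 := by
  have hub : ∀ μ ∈ eigSet ((crownGraph k).lapMatrix ℝ), μ ≤ (k : ℝ) + 2 := by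
    intro μ hμ
    rcases CrownAux.eig_cases k hk μ hμ with h | h | h | h <;> rw [h]
    · positivity
    · have : (2 : ℝ) ≤ (k : ℝ) := by exact_mod_cast hk
      linarith
    · linarith
  have hmem2 := CrownAux.kp2_mem k hk
  have hmem1 := CrownAux.one_mem k hk
  have hmax : lamMax ((crownGraph k).lapMatrix ℝ) = (k : ℝ) + 2 :=
    le_antisymm (csSup_le ⟨_, hmem2⟩ hub) (le_csSup ⟨_, hub⟩ hmem2)
  have hlb : ∀ μ ∈ {μ ∈ eigSet ((crownGraph k).lapMatrix ℝ) | 0 < μ}, (1 : ℝ) ≤ μ := by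
    rintro μ ⟨hμ, hpos⟩
    rcases CrownAux.eig_cases k hk μ hμ with h | h | h | h
    · rw [h] at hpos; exact absurd hpos (lt_irrefl 0)
    · rw [h]
    · rw [h]; exact_mod_cast Nat.one_le_iff_ne_zero.mpr (by omega)
    · rw [h]
      have h2 : (0 : ℝ) ≤ (k : ℝ) := Nat.cast_nonneg k
      linarith
  have h1mem : (1 : ℝ) ∈ {μ ∈ eigSet ((crownGraph k).lapMatrix ℝ) | 0 < μ} :=
    ⟨hmem1, one_pos⟩
  have hmin : lamMinPos ((crownGraph k).lapMatrix ℝ) = 1 :=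
    le_antisymm (csInf_le ⟨1, hlb⟩ h1mem) (le_csInf ⟨1, h1mem⟩ hlb)
  refine ⟨hmax, hmin, ?_⟩
  rw [chi, hmax, hmin, div_one]
end

section
/- For all integers n ≥ 3 and k ≥ 2, the smallest positive eigenvalue of the Laplacian of the ring-of-cliques graph satisfies λ_min^+(L(G_RC(n,k))) = θ₂(2 − 2cos(2π/n)), where θ₂(λ) = (k + λ − √(λ² + 2(k−2)λ + k²))/2. -/
open Matrix

/-- `θ₂(λ) = (k + λ − √(λ² + 2(k−2)λ + k²))/2`. -/
noncomputable def theta2 (k : ℕ) (lam : ℝ) : ℝ :=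
  ((k : ℝ) + lam - Real.sqrt (lam ^ 2 + 2 * ((k : ℝ) - 2) * lam + (k : ℝ) ^ 2)) / 2

namespace RCAux

open Finset
open Fin.NatCast Fin.CommRing

set_option linter.unusedSectionVars false
set_option linter.unusedVariables false

section Lap

lemma lap_mulVec {V : Type*} [Fintype V] [DecidableEq V] (G : SimpleGraph V) [DecidableRel G.Adj]
    (x : V → ℝ) (v : V) :
    (G.lapMatrix ℝ).mulVec x v = ∑ u, if G.Adj v u then x v - x u else 0 := by
  rw [SimpleGraph.lapMatrix_mulVec_apply]
  have hdeg : (G.degree v : ℝ) = ∑ u, if G.Adj v u then (1:ℝ) else 0 := by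
    rw [SimpleGraph.degree, SimpleGraph.neighborFinset_eq_filter, Finset.card_filter]
    push_cast
    simp
  have hnb : ∑ u ∈ G.neighborFinset v, x u = ∑ u, if G.Adj v u then x u else 0 := by
    rw [SimpleGraph.neighborFinset_eq_filter, Finset.sum_filter]
  rw [hdeg, hnb, Finset.sum_mul, ← Finset.sum_sub_distrib]
  apply Finset.sum_congr rfl
  intro u _
  split <;> simp

end Lap

section FinFacts

variable {n k : ℕ} [NeZero n] [NeZero k]

lemma fin_val_one (hn : 2 ≤ n) : (1 : Fin n).val = 1 := by
  have h : 1 % n = 1 := Nat.mod_eq_of_lt (by omega)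
  simp [Fin.val_one', h]

lemma val_add_one (hn : 2 ≤ n) (i : Fin n) : (i+1).val = (i.val + 1) % n := by
  rw [Fin.add_def, fin_val_one hn]

lemma succ_iff (hn : 2 ≤ n) (i j : Fin n) : j.val = (i.val + 1) % n ↔ j = i + 1 := by
  rw [Fin.ext_iff, val_add_one hn]

lemma fin_one_ne_zero (hn : 2 ≤ n) : (1 : Fin n) ≠ 0 := by
  simp [Fin.ext_iff, fin_val_one hn]
  omega

lemma adj_nonhub (hn : 2 ≤ n) (hk : 2 ≤ k) (i : Fin n) (a : Fin k) (ha : a ≠ 0)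
    (j : Fin n) (b : Fin k) :
    (ringClique n k).Adj (i,a) (j,b) ↔ (j = i ∧ b ≠ a) := by
  have hav : a.val ≠ 0 := fun h => ha (Fin.ext h)
  constructor
  · rintro ⟨hne, h | ⟨h1, h2, h3⟩⟩
    · exact ⟨h.symm, fun hb => hne (Prod.ext_iff.mpr ⟨h, hb.symm⟩)⟩
    · exact absurd h1 hav
  · rintro ⟨hj, hb⟩
    refine ⟨fun h => hb (congrArg Prod.snd h).symm, Or.inl hj.symm⟩

lemma adj_hub (hn : 3 ≤ n) (hk : 2 ≤ k) (i j : Fin n) (b : Fin k) :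
    (ringClique n k).Adj (i,(0:Fin k)) (j,b) ↔
      (j = i ∧ b ≠ 0) ∨ (b = 0 ∧ (j = i + 1 ∨ j = i - 1)) := by
  have h1ne : (1 : Fin n) ≠ 0 := fin_one_ne_zero (by omega)
  have hsucc : ∀ u v : Fin n, v.val = (u.val + 1) % n ↔ v = u + 1 := succ_iff (by omega)
  constructor
  · rintro ⟨hne, h | ⟨h1, h2, h3⟩⟩
    · refine Or.inl ⟨h.symm, fun hb => hne (Prod.ext_iff.mpr ⟨h, hb.symm⟩)⟩
    · have hb : b = 0 := Fin.ext h2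
      rcases h3 with h3 | h3
      · exact Or.inr ⟨hb, Or.inl ((hsucc i j).mp h3)⟩
      · refine Or.inr ⟨hb, Or.inr ?_⟩
        have := (hsucc j i).mp h3
        rw [this]; ring
  · rintro (⟨hj, hb⟩ | ⟨hb, hj | hj⟩)
    · refine ⟨fun h => hb (congrArg Prod.snd h).symm, Or.inl hj.symm⟩
    · refine ⟨fun h => ?_, Or.inr ⟨rfl, by rw [hb]; rfl, Or.inl ((hsucc i j).mpr hj)⟩⟩
      have hji : j = i := (congrArg Prod.fst h).symm
      rw [hji] at hj
      exact h1ne (by linear_combination -hj)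
    · refine ⟨fun h => ?_, Or.inr ⟨rfl, by rw [hb]; rfl,
        Or.inr ((hsucc j i).mpr (by rw [hj]; ring))⟩⟩
      have hji : j = i := (congrArg Prod.fst h).symm
      rw [hji] at hj
      exact h1ne (by linear_combination hj)

lemma mulVec_nonhub (hn : 2 ≤ n) (hk : 2 ≤ k) (x : Fin n × Fin k → ℝ)
    (i : Fin n) (a : Fin k) (ha : a ≠ 0) :
    ((ringClique n k).lapMatrix ℝ).mulVec x (i,a) = k * x (i,a) - ∑ b, x (i,b) := by
  rw [lap_mulVec, Fintype.sum_prod_type]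
  have step1 : ∀ j : Fin n, (∑ b, if (ringClique n k).Adj (i,a) (j,b) then x (i,a) - x (j,b) else 0)
      = if j = i then (∑ b, (x (i,a) - x (i,b))) else 0 := by
    intro j
    by_cases hj : j = i
    · simp only [hj, if_pos rfl]
      apply Finset.sum_congr rfl
      intro b _
      simp only [adj_nonhub hn hk i a ha]
      by_cases hb : b = a
      · subst hb; simp
      · simp [hb]
    · rw [if_neg hj]
      apply Finset.sum_eq_zero
      intro b _
      simp only [adj_nonhub hn hk i a ha]
      rw [if_neg (by tauto)]
  rw [Finset.sum_congr rfl (fun j _ => step1 j), Finset.sum_ite_eq' Finset.univ i,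
    if_pos (Finset.mem_univ i),
    Finset.sum_sub_distrib, Finset.sum_const, Finset.card_univ, Fintype.card_fin]
  push_cast
  ring

lemma mulVec_hub (hn : 3 ≤ n) (hk : 2 ≤ k) (x : Fin n × Fin k → ℝ) (i : Fin n) :
    ((ringClique n k).lapMatrix ℝ).mulVec x (i,(0:Fin k)) =
      k * x (i,0) - (∑ b, x (i,b)) + 2 * x (i,0) - x (i+1,(0:Fin k)) - x (i-1,(0:Fin k)) := by
  have h2 : (2 : Fin n) ≠ 0 := by
    have h21 : (2 : Fin n) = 1 + 1 := by norm_num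
    have hv : (2 : Fin n).val = (1 + 1) % n := by
      rw [h21, val_add_one (by omega : 2 ≤ n), fin_val_one (by omega : 2 ≤ n)]
    have : (1 + 1) % n = 2 := Nat.mod_eq_of_lt (by omega)
    simp [Fin.ext_iff, hv, this]
  have hne1 : i + 1 ≠ i - 1 := fun h => h2 (by linear_combination h)
  have hne2 : i + 1 ≠ i := fun h => fin_one_ne_zero (n := n) (by omega) (by linear_combination h)
  have hne3 : i - 1 ≠ i := fun h => fin_one_ne_zero (n := n) (by omega) (by linear_combination -h)
  rw [lap_mulVec, Fintype.sum_prod_type]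
  have step1 : ∀ j : Fin n, (∑ b, if (ringClique n k).Adj (i,0) (j,b) then x (i,0) - x (j,b) else 0)
      = (if j = i then (∑ b, (x (i,0) - x (i,b))) else 0)
        + (if j = i + 1 then x (i,0) - x (i+1,0) else 0)
        + (if j = i - 1 then x (i,0) - x (i-1,0) else 0) := by
    intro j
    by_cases hj : j = i
    · simp only [hj]
      rw [if_pos trivial, if_neg (fun h => hne2 h.symm), if_neg (fun h => hne3 h.symm)]
      rw [add_zero, add_zero]
      apply Finset.sum_congr rfl
      intro b _
      simp only [adj_hub hn hk]
      by_cases hb : b = 0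
      · subst hb
        rw [if_neg (by tauto)]
        simp
      · rw [if_pos (by tauto)]
    · by_cases hj1 : j = i + 1
      · subst hj1
        rw [if_neg hj, if_pos rfl, if_neg (by tauto)]
        rw [zero_add, add_zero]
        have : ∀ b : Fin k, ((ringClique n k).Adj (i,0) (i+1,b)) ↔ b = 0 := by
          intro b
          rw [adj_hub hn hk]
          constructor
          · rintro (⟨h,_⟩|⟨h,_⟩)
            · exact absurd h hne2
            · exact h
          · intro hb; exact Or.inr ⟨hb, Or.inl rfl⟩
        calc (∑ b, if (ringClique n k).Adj (i,0) (i+1,b) then x (i,0) - x (i+1,b) else 0)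
            = ∑ b, if b = (0:Fin k) then x (i,0) - x (i+1,b) else 0 := by
              apply Finset.sum_congr rfl; intro b _; simp only [this b]
          _ = x (i,0) - x (i+1,0) := by rw [Finset.sum_ite_eq' Finset.univ (0:Fin k)
                (fun b => x (i,0) - x (i+1,b)), if_pos (Finset.mem_univ _)]
      · by_cases hj2 : j = i - 1
        · subst hj2
          rw [if_neg hj, if_neg hj1, if_pos rfl]
          rw [zero_add, zero_add]
          have : ∀ b : Fin k, ((ringClique n k).Adj (i,0) (i-1,b)) ↔ b = 0 := by
            intro b
            rw [adj_hub hn hk]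
            constructor
            · rintro (⟨h,_⟩|⟨h,_⟩)
              · exact absurd h hne3
              · exact h
            · intro hb; exact Or.inr ⟨hb, Or.inr rfl⟩
          calc (∑ b, if (ringClique n k).Adj (i,0) (i-1,b) then x (i,0) - x (i-1,b) else 0)
              = ∑ b, if b = (0:Fin k) then x (i,0) - x (i-1,b) else 0 := by
                apply Finset.sum_congr rfl; intro b _; simp only [this b]
            _ = x (i,0) - x (i-1,0) := by rw [Finset.sum_ite_eq' Finset.univ (0:Fin k)
                  (fun b => x (i,0) - x (i-1,b)), if_pos (Finset.mem_univ _)]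
        · rw [if_neg hj, if_neg hj1, if_neg hj2]
          simp only [add_zero]
          apply Finset.sum_eq_zero
          intro b _
          simp only [adj_hub hn hk]
          rw [if_neg (by tauto)]
  rw [Finset.sum_congr rfl (fun j _ => step1 j)]
  rw [Finset.sum_add_distrib, Finset.sum_add_distrib]
  rw [Finset.sum_ite_eq' Finset.univ i, Finset.sum_ite_eq' Finset.univ (i+1),
    Finset.sum_ite_eq' Finset.univ (i-1)]
  simp only [Finset.mem_univ, if_pos]
  rw [Finset.sum_sub_distrib, Finset.sum_const, Finset.card_univ, Fintype.card_fin]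
  push_cast
  ring

end FinFacts

section Theta

variable {k : ℕ}

lemma disc_nonneg (hk : 2 ≤ k) (lam : ℝ) :
    0 ≤ lam ^ 2 + 2 * ((k : ℝ) - 2) * lam + (k : ℝ) ^ 2 := by
  have hk' : (2:ℝ) ≤ k := by exact_mod_cast hk
  nlinarith [sq_nonneg (lam + (k:ℝ) - 2)]

lemma sqrt_disc_sq (hk : 2 ≤ k) (lam : ℝ) :
    (Real.sqrt (lam ^ 2 + 2 * ((k : ℝ) - 2) * lam + (k : ℝ) ^ 2)) ^ 2
      = lam ^ 2 + 2 * ((k : ℝ) - 2) * lam + (k : ℝ) ^ 2 :=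
  Real.sq_sqrt (disc_nonneg hk lam)

lemma sqrt_disc_ge (hk : 2 ≤ k) {lam : ℝ} (hl : 0 ≤ lam) :
    lam + (k:ℝ) - 2 ≤ Real.sqrt (lam ^ 2 + 2 * ((k : ℝ) - 2) * lam + (k : ℝ) ^ 2) := by
  have hk' : (2:ℝ) ≤ k := by exact_mod_cast hk
  have h1 : (lam + (k:ℝ) - 2) ^ 2 ≤ lam ^ 2 + 2 * ((k : ℝ) - 2) * lam + (k : ℝ) ^ 2 := by nlinarith
  calc lam + (k:ℝ) - 2 = Real.sqrt ((lam + (k:ℝ) - 2)^2) := (Real.sqrt_sq (by linarith)).symm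
    _ ≤ _ := Real.sqrt_le_sqrt h1

lemma theta2_quad (hk : 2 ≤ k) (lam : ℝ) :
    (theta2 k lam) ^ 2 - ((k:ℝ) + lam) * theta2 k lam + lam = 0 := by
  have hs := sqrt_disc_sq hk lam
  unfold theta2
  nlinarith [hs]

lemma theta2_le_one (hk : 2 ≤ k) {lam : ℝ} (hl : 0 ≤ lam) : theta2 k lam ≤ 1 := by
  have := sqrt_disc_ge hk hl
  unfold theta2
  linarith

lemma theta2_pos (hk : 2 ≤ k) {lam : ℝ} (hl : 0 < lam) : 0 < theta2 k lam := by
  have hk' : (2:ℝ) ≤ k := by exact_mod_cast hk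
  have hs := sqrt_disc_sq hk lam
  have hs0 : 0 ≤ Real.sqrt (lam ^ 2 + 2 * ((k : ℝ) - 2) * lam + (k : ℝ) ^ 2) := Real.sqrt_nonneg _
  have hlt : Real.sqrt (lam ^ 2 + 2 * ((k : ℝ) - 2) * lam + (k : ℝ) ^ 2) < (k:ℝ) + lam := by
    nlinarith
  unfold theta2
  linarith

lemma theta2_mono (hk : 2 ≤ k) {a b : ℝ} (ha : 0 ≤ a) (hab : a ≤ b) :
    theta2 k a ≤ theta2 k b := by
  have hk' : (2:ℝ) ≤ k := by exact_mod_cast hk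
  set sa := Real.sqrt (a ^ 2 + 2 * ((k : ℝ) - 2) * a + (k : ℝ) ^ 2) with hsa
  have hsa2 := sqrt_disc_sq hk a
  have hsage := sqrt_disc_ge hk ha
  have hsa0 : 0 ≤ sa := Real.sqrt_nonneg _
  have key : Real.sqrt (b ^ 2 + 2 * ((k : ℝ) - 2) * b + (k : ℝ) ^ 2) ≤ sa + (b - a) := by
    have h1 : b ^ 2 + 2 * ((k : ℝ) - 2) * b + (k : ℝ) ^ 2 ≤ (sa + (b - a))^2 := by nlinarith
    calc Real.sqrt (b ^ 2 + 2 * ((k : ℝ) - 2) * b + (k : ℝ) ^ 2) ≤ Real.sqrt ((sa + (b-a))^2) :=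
          Real.sqrt_le_sqrt h1
      _ = sa + (b - a) := Real.sqrt_sq (by linarith)
  unfold theta2
  rw [← hsa]
  linarith

lemma ge_theta2_of_root (hk : 2 ≤ k) {nu mu : ℝ} (hnu : 0 ≤ nu)
    (hroot : mu ^ 2 - ((k:ℝ) + nu) * mu + nu = 0) : theta2 k nu ≤ mu := by
  have hs := sqrt_disc_sq hk nu
  have hs0 : 0 ≤ Real.sqrt (nu ^ 2 + 2 * ((k : ℝ) - 2) * nu + (k : ℝ) ^ 2) := Real.sqrt_nonneg _
  set s := Real.sqrt (nu ^ 2 + 2 * ((k : ℝ) - 2) * nu + (k : ℝ) ^ 2) with hsdef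
  have hfac : (mu - ((k:ℝ) + nu - s)/2) * (mu - ((k:ℝ) + nu + s)/2) = 0 := by nlinarith
  unfold theta2
  rw [← hsdef]
  rcases mul_eq_zero.mp hfac with h | h
  · linarith [eq_of_sub_eq_zero h]
  · have := eq_of_sub_eq_zero h
    linarith

end Theta

section Cycle

lemma cycle_rigid (n : ℕ) [NeZero n] (hn : 3 ≤ n) (φ : ℝ) (hφ0 : 0 < φ)
    (hφn : (n:ℝ) * φ < 2 * Real.pi) (h : Fin n → ℝ)
    (hrec : ∀ i : Fin n, h (i+1) + h (i-1) = 2 * Real.cos φ * h i) : h = 0 := by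
  have hπ : 0 < Real.pi := Real.pi_pos
  have hn3 : (3:ℝ) ≤ (n:ℝ) := by exact_mod_cast hn
  have hφπ : φ < Real.pi := by nlinarith
  have hsφ : 0 < Real.sin φ := Real.sin_pos_of_pos_of_lt_pi hφ0 hφπ
  set g : ℕ → ℝ := fun m => h ((m : ℕ) : Fin n) with hg
  have grec : ∀ m : ℕ, g (m+2) + g m = 2 * Real.cos φ * g (m+1) := by
    intro m
    have := hrec ((m+1 : ℕ) : Fin n)
    have e1 : ((m+1 : ℕ) : Fin n) + 1 = ((m+2 : ℕ) : Fin n) := by push_cast; ring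
    have e2 : ((m+1 : ℕ) : Fin n) - 1 = ((m : ℕ) : Fin n) := by push_cast; ring
    rw [e1, e2] at this
    simpa [hg] using this
  set A : ℝ := g 0 with hA
  set B : ℝ := (g 1 - Real.cos φ * g 0) / Real.sin φ with hB
  have key : ∀ m : ℕ, g m = A * Real.cos (m * φ) + B * Real.sin (m * φ) := by
    have key2 : ∀ m : ℕ, g m = A * Real.cos (m * φ) + B * Real.sin (m * φ) ∧
        g (m+1) = A * Real.cos ((m+1 : ℕ) * φ) + B * Real.sin ((m+1 : ℕ) * φ) := by
      intro m
      induction m with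
      | zero =>
        constructor
        · simp [hA]
        · push_cast
          rw [one_mul]
          rw [hB]
          field_simp
          ring
      | succ p ih =>
        refine ⟨ih.2, ?_⟩
        have e1 : ((p+2 : ℕ) : ℝ) * φ = ((p+1 : ℕ) : ℝ) * φ + φ := by push_cast; ring
        have e2 : ((p : ℕ) : ℝ) * φ = ((p+1 : ℕ) : ℝ) * φ - φ := by push_cast; ring
        have := grec p
        have h2 : g (p+2) = 2 * Real.cos φ * g (p+1) - g p := by linarith
        rw [h2, ih.1, ih.2, e1, e2, Real.cos_add, Real.sin_add, Real.cos_sub, Real.sin_sub]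
        push_cast
        ring
    exact fun m => (key2 m).1
  have hgn : g n = g 0 := by simp [hg, Fin.natCast_self]
  have hgn1 : g (n+1) = g 1 := by
    have : ((n+1 : ℕ) : Fin n) = ((1:ℕ) : Fin n) := by push_cast; simp [Fin.natCast_self]
    simp [hg, this]
  set s : ℝ := Real.sin ((n:ℝ) * φ / 2) with hs
  set c : ℝ := Real.cos ((n:ℝ) * φ / 2) with hc
  have hs_pos : 0 < s := by
    apply Real.sin_pos_of_pos_of_lt_pi
    · positivity
    · nlinarith
  have hCn : Real.cos ((n:ℝ) * φ) = 2 * c^2 - 1 := by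
    rw [show (n:ℝ) * φ = 2 * ((n:ℝ) * φ / 2) by ring, Real.cos_two_mul]
  have hSn : Real.sin ((n:ℝ) * φ) = 2 * s * c := by
    rw [show (n:ℝ) * φ = 2 * ((n:ℝ) * φ / 2) by ring, Real.sin_two_mul]
  have hpy : s^2 + c^2 = 1 := by
    rw [hs, hc]; exact Real.sin_sq_add_cos_sq _
  have eqI : A * Real.cos ((n:ℝ) * φ) + B * Real.sin ((n:ℝ) * φ) = A := by
    have := key n
    rw [hgn] at this
    rw [← this, hA]
  have eqII : A * (Real.cos ((n:ℝ)*φ) * Real.cos φ - Real.sin ((n:ℝ)*φ) * Real.sin φ)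
      + B * (Real.sin ((n:ℝ)*φ) * Real.cos φ + Real.cos ((n:ℝ)*φ) * Real.sin φ)
      = A * Real.cos φ + B * Real.sin φ := by
    have h1 := key (n+1)
    rw [hgn1, key 1] at h1
    have e1 : ((n+1 : ℕ) : ℝ) * φ = (n:ℝ) * φ + φ := by push_cast; ring
    rw [e1, Real.cos_add, Real.sin_add] at h1
    have e2 : ((1:ℕ) : ℝ) * φ = φ := by push_cast; ring
    rw [e2] at h1
    linarith [h1]
  clear_value A B s c
  rw [hCn, hSn] at eqI eqII
  have E1 : A * s - B * c = 0 := by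
    have h2 : (2*s) * (A * s - B * c) = 0 := by linear_combination (-1) * eqI + (2*A) * hpy
    rcases mul_eq_zero.mp h2 with h' | h'
    · linarith
    · exact h'
  have E2' : Real.sin φ * (B * (2*c^2-1) - A * (2*s*c) - B) = 0 := by
    linear_combination eqII - Real.cos φ * eqI
  have E2'' : B * (2*c^2-1) - A * (2*s*c) - B = 0 := by
    rcases mul_eq_zero.mp E2' with h' | h'
    · linarith
    · exact h'
  have E2 : A * c + B * s = 0 := by
    have h2 : (2*s) * (A * c + B * s) = 0 := by linear_combination (-1) * E2'' + (2*B) * hpy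
    rcases mul_eq_zero.mp h2 with h' | h'
    · linarith
    · exact h'
  have hA0 : A = 0 := by linear_combination s * E1 + c * E2 - A * hpy
  have hB0 : B = 0 := by linear_combination (-c) * E1 + s * E2 - B * hpy
  funext i
  have : h i = g i.val := by simp [hg, Fin.cast_val_eq_self]
  rw [this, key i.val, hA0, hB0]
  simp

end Cycle

section Trig

variable {n : ℕ} [NeZero n]

lemma cos_mod (hn : 1 ≤ n) (m : ℕ) (θ : ℝ) :
    Real.cos (2 * Real.pi * ((m % n : ℕ) : ℝ) / n + θ) = Real.cos (2 * Real.pi * m / n + θ) := by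
  have hn0 : (n:ℝ) ≠ 0 := by positivity
  have hm : (m : ℝ) = (n:ℝ) * ((m / n : ℕ) : ℝ) + ((m % n : ℕ) : ℝ) := by
    exact_mod_cast (Nat.div_add_mod m n).symm
  have hcast : (((m / n : ℕ) : ℤ) : ℝ) = ((m / n : ℕ) : ℝ) := Int.cast_natCast _
  have key : 2 * Real.pi * (m:ℝ) / n + θ
      = (2 * Real.pi * ((m % n : ℕ) : ℝ) / n + θ) + ((m / n : ℕ) : ℤ) * (2 * Real.pi) := by
    rw [hcast]
    field_simp
    linear_combination (2 * Real.pi) * hm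
  rw [key, Real.cos_add_int_mul_two_pi]

lemma cst_shift (hn : 3 ≤ n) (i : Fin n) (θ : ℝ) :
    Real.cos (2 * Real.pi * ((i+1 : Fin n).val : ℝ) / n + θ)
      = Real.cos (2 * Real.pi * (i.val : ℝ) / n + (2 * Real.pi / n + θ)) := by
  have hn0 : (n:ℝ) ≠ 0 := by positivity
  rw [val_add_one (by omega), cos_mod (by omega)]
  congr 1
  push_cast
  field_simp
  ring

lemma cst_ring (hn : 3 ≤ n) (i : Fin n) :
    Real.cos (2 * Real.pi * ((i+1 : Fin n).val : ℝ) / n + 0)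
      + Real.cos (2 * Real.pi * ((i-1 : Fin n).val : ℝ) / n + 0)
    = 2 * Real.cos (2 * Real.pi / n) * Real.cos (2 * Real.pi * (i.val : ℝ) / n + 0) := by
  set j : Fin n := i - 1 with hj
  have hij : i = j + 1 := by rw [hj]; ring
  rw [hij]
  rw [cst_shift hn (j+1) 0, cst_shift hn j (2 * Real.pi / n + 0), cst_shift hn j 0]
  set α := 2 * Real.pi * (j.val : ℝ) / n
  set δ := 2 * Real.pi / n
  have trig : ∀ x d : ℝ, Real.cos (x + d) + Real.cos (x - d) = 2 * Real.cos d * Real.cos x := by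
    intro x d
    rw [Real.cos_add, Real.cos_sub]
    ring
  have e1 : Real.cos (α + (δ + (δ + 0))) = Real.cos ((α + (δ + 0)) + δ) := by congr 1; ring
  have e2 : Real.cos (α + 0) = Real.cos ((α + (δ + 0)) - δ) := by congr 1; ring
  rw [e1, e2, trig]

lemma lam1_pos (hn : 3 ≤ n) : 0 < 2 - 2 * Real.cos (2 * Real.pi / n) := by
  have hπ : 0 < Real.pi := Real.pi_pos
  have hn3 : (3:ℝ) ≤ (n:ℝ) := by exact_mod_cast hn
  have h1 : (0:ℝ) < 2 * Real.pi / n := by positivity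
  have h2 : 2 * Real.pi / n ≤ Real.pi := by
    rw [div_le_iff₀ (by positivity)]
    nlinarith
  have : Real.cos (2 * Real.pi / n) < Real.cos 0 := by
    apply Real.strictAntiOn_cos ⟨le_refl 0, hπ.le⟩ ⟨h1.le, h2⟩ h1
  rw [Real.cos_zero] at this
  linarith

lemma two_pi_n_le_pi (hn : 3 ≤ n) : 2 * Real.pi / n ≤ Real.pi := by
  have hπ : 0 < Real.pi := Real.pi_pos
  have hn3 : (3:ℝ) ≤ (n:ℝ) := by exact_mod_cast hn
  rw [div_le_iff₀ (by positivity)]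
  nlinarith

end Trig

end RCAux

namespace RCAux

open Finset

section Main

variable {n k : ℕ} [NeZero n] [NeZero k]

lemma ite_sum (hk : 2 ≤ k) (u v : ℝ) :
    ∑ b : Fin k, (if b = (0:Fin k) then u else v) = u + ((k:ℝ) - 1) * v := by
  have hterm : ∀ b : Fin k, (if b = (0:Fin k) then u else v)
      = v + (if b = (0:Fin k) then u - v else 0) := by
    intro b; split <;> ring
  rw [Finset.sum_congr rfl (fun b _ => hterm b), Finset.sum_add_distrib, Finset.sum_const,
    Finset.card_univ, Fintype.card_fin,
    Finset.sum_ite_eq' Finset.univ (0:Fin k) (fun _ => u - v), if_pos (Finset.mem_univ _)]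
  push_cast
  ring

lemma mem_eig (hn : 3 ≤ n) (hk : 2 ≤ k) :
    ∃ x : Fin n × Fin k → ℝ, x ≠ 0 ∧
      ((ringClique n k).lapMatrix ℝ).mulVec x
        = theta2 k (2 - 2 * Real.cos (2 * Real.pi / n)) • x := by
  have hn0 : (n:ℝ) ≠ 0 := by positivity
  set lam : ℝ := 2 - 2 * Real.cos (2 * Real.pi / n) with hlam
  set T : ℝ := theta2 k lam with hT
  have hquad : T ^ 2 - ((k:ℝ) + lam) * T + lam = 0 := theta2_quad hk lam
  set cst : Fin n → ℝ := fun i => Real.cos (2 * Real.pi * (i.val : ℝ) / n + 0) with hcst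
  refine ⟨fun v => cst v.1 * (if v.2 = 0 then 1 - T else 1), ?_, ?_⟩
  · intro hzero
    have h1 : cst 0 * (if (1 : Fin k) = 0 then 1 - T else 1) = 0 := congrFun hzero (0, 1)
    rw [if_neg (fin_one_ne_zero hk)] at h1
    have hc0 : cst 0 = 1 := by
      rw [hcst]
      norm_num
    rw [hc0] at h1
    norm_num at h1
  · funext v
    obtain ⟨i, a⟩ := v
    have hbred : ∀ (j : Fin n) (b : Fin k),
        (fun v : Fin n × Fin k => cst v.1 * (if v.2 = (0:Fin k) then 1 - T else 1)) (j, b)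
          = cst j * (if b = (0:Fin k) then 1 - T else 1) := fun _ _ => rfl
    have hsum : ∑ b, cst i * (if b = (0:Fin k) then 1 - T else 1)
        = cst i * ((k:ℝ) - T) := by
      have : ∀ b : Fin k, cst i * (if b = (0:Fin k) then 1 - T else 1)
          = (if b = (0:Fin k) then cst i * (1 - T) else cst i) := by
        intro b
        by_cases hb : b = 0
        · rw [if_pos hb, if_pos hb]
        · rw [if_neg hb, if_neg hb]; ring
      rw [Finset.sum_congr rfl (fun b _ => this b), ite_sum hk]
      ring
    by_cases ha : a = 0
    · subst ha
      rw [mulVec_hub hn hk _ i]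
      simp only [Pi.smul_apply, smul_eq_mul, hbred]
      rw [hsum]
      simp only [if_true]
      have hring := cst_ring hn i
      have hlam2 : 2 * Real.cos (2 * Real.pi / n) = 2 - lam := by rw [hlam]; ring
      rw [hlam2] at hring
      simp only [hcst]
      linear_combination (T - 1) * hring + (Real.cos (2 * Real.pi * (i.val : ℝ) / n + 0)) * hquad
    · rw [mulVec_nonhub (by omega) hk _ i a ha]
      simp only [Pi.smul_apply, smul_eq_mul, hbred]
      rw [hsum]
      rw [if_neg ha]
      ring

lemma lower_bound (hn : 3 ≤ n) (hk : 2 ≤ k) {μ : ℝ} (hμpos : 0 < μ)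
    (x : Fin n × Fin k → ℝ) (hx0 : x ≠ 0)
    (hxe : ((ringClique n k).lapMatrix ℝ).mulVec x = μ • x) :
    theta2 k (2 - 2 * Real.cos (2 * Real.pi / n)) ≤ μ := by
  by_contra hlt'
  push_neg at hlt'
  set lam : ℝ := 2 - 2 * Real.cos (2 * Real.pi / n) with hlam
  set T : ℝ := theta2 k lam with hT
  have hπ : 0 < Real.pi := Real.pi_pos
  have hk2 : (2:ℝ) ≤ (k:ℝ) := by exact_mod_cast hk
  have hlampos : 0 < lam := lam1_pos hn
  have hT1 : T ≤ 1 := theta2_le_one hk hlampos.le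
  have hμ1 : μ < 1 := lt_of_lt_of_le hlt' hT1
  have hμk : μ < (k:ℝ) := by linarith
  have hkμ : (k:ℝ) - μ ≠ 0 := by linarith
  have h1μ : (0:ℝ) < 1 - μ := by linarith
  have h1μ' : (1:ℝ) - μ ≠ 0 := by linarith
  have heig : ∀ v, ((ringClique n k).lapMatrix ℝ).mulVec x v = μ * x v := by
    intro v; rw [hxe]; simp
  obtain ⟨y, hy⟩ : ∃ y : Fin n → ℝ, ∀ i : Fin n, ((k:ℝ) - μ) * y i = ∑ b, x (i,b) :=
    ⟨fun i => (∑ b, x (i,b)) / ((k:ℝ) - μ), fun i => by field_simp⟩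
  obtain ⟨H, hHd⟩ : ∃ H : Fin n → ℝ, ∀ i : Fin n, H i = x (i,(0:Fin k)) :=
    ⟨fun i => x (i,(0:Fin k)), fun i => rfl⟩
  have hcl : ∀ (i : Fin n) (a : Fin k), a ≠ 0 → x (i,a) = y i := by
    intro i a ha
    have h1 := heig (i,a)
    rw [mulVec_nonhub (by omega) hk x i a ha] at h1
    have h2 := hy i
    have h3 : ((k:ℝ) - μ) * x (i,a) = ((k:ℝ) - μ) * y i := by linarith
    exact mul_left_cancel₀ hkμ h3
  have hS : ∀ i : Fin n, ∑ b, x (i,b) = H i + ((k:ℝ) - 1) * y i := by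
    intro i
    have hterm : ∀ b : Fin k, x (i,b) = if b = (0:Fin k) then x (i,(0:Fin k)) else y i := by
      intro b
      by_cases hb : b = 0
      · rw [if_pos hb, hb]
      · rw [if_neg hb, hcl i b hb]
    rw [Finset.sum_congr rfl (fun b _ => hterm b), ite_sum hk, hHd]
  have hyh : ∀ i : Fin n, (1 - μ) * y i = H i := by
    intro i
    have h1 := hy i
    rw [hS i] at h1
    linarith
  obtain ⟨ν, hν⟩ : ∃ v : ℝ, v = μ - (k:ℝ) + 1 + ((k:ℝ) - 1) / (1 - μ) := ⟨_, rfl⟩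
  have hrec : ∀ i : Fin n, H (i+1) + H (i-1) = (2 - ν) * H i := by
    intro i
    have h1 := heig (i,0)
    rw [mulVec_hub hn hk x i, hS i] at h1
    have h2 : H (i+1) + H (i-1) = ((k:ℝ) + 1 - μ) * H i - ((k:ℝ) - 1) * y i := by
      rw [hHd (i+1), hHd (i-1), hHd i]
      rw [hHd i] at h1
      linarith
    have h3 := hyh i
    rw [h2, hν]
    field_simp
    linear_combination (-(k:ℝ) + 1) * h3
  have hroot : μ ^ 2 - ((k:ℝ) + ν) * μ + ν = 0 := by
    rw [hν]
    field_simp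
    ring
  have hHne : ∃ i : Fin n, H i ≠ 0 := by
    by_contra hall
    push_neg at hall
    apply hx0
    funext v
    obtain ⟨i, a⟩ := v
    have hyz : y i = 0 := by
      have h1 := hyh i
      rw [hall i] at h1
      rcases mul_eq_zero.mp h1 with h | h
      · exact absurd h h1μ'
      · exact h
    by_cases ha : a = 0
    · subst ha
      have := hHd i
      rw [hall i] at this
      exact this.symm
    · rw [hcl i a ha, hyz]
      rfl
  have hre : ∀ f : Fin n → ℝ, ∑ i, f (i+1) = ∑ i, f i := by
    intro f
    exact Fintype.sum_equiv (Equiv.addRight (1 : Fin n)) _ _ (fun i => rfl)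
  have hSpos : 0 < ∑ i, H i ^ 2 := by
    obtain ⟨i0, hi0⟩ := hHne
    apply Finset.sum_pos' (fun i _ => sq_nonneg _)
    exact ⟨i0, Finset.mem_univ _, by positivity⟩
  have hν0 : 0 ≤ ν := by
    have hsum1 : ∑ i, H i * H (i+1) = ∑ i, H (i-1) * H i := by
      have h1 := hre (fun i => H (i-1) * H i)
      have h2 : ∀ i : Fin n, H (i+1-1) * H (i+1) = H i * H (i+1) := by
        intro i; rw [add_sub_cancel_right]
      rw [Finset.sum_congr rfl (fun i _ => h2 i)] at h1
      exact h1
    have hsum2 : ∑ i, H (i+1) ^ 2 = ∑ i, H i ^ 2 := hre (fun i => H i ^ 2)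
    have htot : ∑ i, (H (i+1) + H (i-1)) * H i = (2 - ν) * ∑ i, H i ^ 2 := by
      rw [Finset.mul_sum]
      apply Finset.sum_congr rfl
      intro i _
      rw [hrec i]; ring
    have hexp : ∑ i, (H (i+1) + H (i-1)) * H i = 2 * ∑ i, H i * H (i+1) := by
      have h2 : ∀ i : Fin n, (H (i+1) + H (i-1)) * H i
          = H i * H (i+1) + H (i-1) * H i := by intro i; ring
      rw [Finset.sum_congr rfl (fun i _ => h2 i), Finset.sum_add_distrib, ← hsum1]
      ring
    have hsq : ∑ i, (H i - H (i+1)) ^ 2 = ν * ∑ i, H i ^ 2 := by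
      have hexpand : ∀ i : Fin n, (H i - H (i+1)) ^ 2
          = H i ^ 2 + H (i+1) ^ 2 - 2 * (H i * H (i+1)) := by intro i; ring
      rw [Finset.sum_congr rfl (fun i _ => hexpand i)]
      rw [Finset.sum_sub_distrib, Finset.sum_add_distrib, hsum2, ← Finset.mul_sum]
      have h2P : 2 * ∑ i, H i * H (i+1) = (2 - ν) * ∑ i, H i ^ 2 := by
        rw [← hexp, htot]
      linarith
    have hsqnn : 0 ≤ ∑ i, (H i - H (i+1)) ^ 2 := Finset.sum_nonneg (fun i _ => sq_nonneg _)
    nlinarith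
  have hννe : ν ≠ 0 := by
    intro h0
    rw [h0] at hroot
    have : μ * (μ - (k:ℝ)) = 0 := by linarith [hroot]
    rcases mul_eq_zero.mp this with h | h
    · exact absurd h (ne_of_gt hμpos)
    · have : μ = (k:ℝ) := by linarith
      linarith
  have hνpos : 0 < ν := lt_of_le_of_ne hν0 (Ne.symm hννe)
  rcases le_or_gt lam ν with hcase | hcase
  · have h1 : theta2 k ν ≤ μ := ge_theta2_of_root hk hν0 hroot
    have h2 : theta2 k lam ≤ theta2 k ν := theta2_mono hk hlampos.le hcase
    rw [← hT] at h2
    linarith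
  · have hcoslt : Real.cos (2 * Real.pi / n) < 1 - ν / 2 := by
      have : ν < 2 - 2 * Real.cos (2 * Real.pi / n) := hcase
      linarith
    have htm1 : (-1:ℝ) ≤ 1 - ν / 2 := by linarith [Real.neg_one_le_cos (2 * Real.pi / n)]
    have ht1 : 1 - ν / 2 < 1 := by linarith
    set φ : ℝ := Real.arccos (1 - ν / 2) with hφ
    have hφcos : Real.cos φ = 1 - ν / 2 := Real.cos_arccos htm1 ht1.le
    have hφ0 : 0 < φ := Real.arccos_pos.mpr ht1
    have hφlt : φ < 2 * Real.pi / n := by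
      by_contra hge
      push_neg at hge
      have hmem1 : (2 * Real.pi / n) ∈ Set.Icc 0 Real.pi :=
        ⟨by positivity, two_pi_n_le_pi hn⟩
      have hmem2 : φ ∈ Set.Icc 0 Real.pi := ⟨Real.arccos_nonneg _, Real.arccos_le_pi _⟩
      have hle := Real.strictAntiOn_cos.antitoneOn hmem1 hmem2 hge
      rw [hφcos] at hle
      linarith
    have hnφ : (n:ℝ) * φ < 2 * Real.pi := by
      have hnpos : (0:ℝ) < n := by positivity
      calc (n:ℝ) * φ < (n:ℝ) * (2 * Real.pi / n) := by
            apply mul_lt_mul_of_pos_left hφlt hnpos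
        _ = 2 * Real.pi := by field_simp
    have hrec' : ∀ i : Fin n, H (i+1) + H (i-1) = 2 * Real.cos φ * H i := by
      intro i
      rw [hφcos, hrec i]
      ring
    have := cycle_rigid n hn φ hφ0 hnφ H hrec'
    obtain ⟨i0, hi0⟩ := hHne
    exact hi0 (congrFun this i0)

end Main

end RCAux

theorem lamMinPos_ringClique (n k : ℕ) (hn : 3 ≤ n) (hk : 2 ≤ k) :
    lamMinPos ((ringClique n k).lapMatrix ℝ) =
      theta2 k (2 - 2 * Real.cos (2 * Real.pi / n)) := by
  haveI : NeZero n := ⟨by omega⟩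
  haveI : NeZero k := ⟨by omega⟩
  set T : ℝ := theta2 k (2 - 2 * Real.cos (2 * Real.pi / n)) with hT
  have hTpos : 0 < T := RCAux.theta2_pos hk (RCAux.lam1_pos hn)
  obtain ⟨x, hx0, hxe⟩ := RCAux.mem_eig hn hk
  have hmem : T ∈ {μ ∈ eigSet ((ringClique n k).lapMatrix ℝ) | 0 < μ} :=
    ⟨⟨x, hx0, hxe⟩, hTpos⟩
  have hlb : ∀ μ ∈ {μ ∈ eigSet ((ringClique n k).lapMatrix ℝ) | 0 < μ}, T ≤ μ := by
    rintro μ ⟨⟨x', hx'0, hx'e⟩, hμpos⟩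
    exact RCAux.lower_bound hn hk hμpos x' hx'0 hx'e
  unfold lamMinPos
  apply le_antisymm
  · exact csInf_le ⟨T, hlb⟩ hmem
  · exact le_csInf ⟨T, hmem⟩ hlb
end

section
/- There exist constants 0 < c₁ ≤ c₂ such that for all integers n ≥ 3 and k ≥ 2, the condition number of the Laplacian of the ring-of-cliques graph satisfies c₁ n²k² ≤ χ(L(G_RC(n,k))) ≤ c₂ n²k², i.e. χ(L(G_RC(n,k))) = Θ(n²k²). -/
open Matrix

open Finset
open Fin.NatCast Fin.CommRing
set_option linter.unusedSectionVars false
set_option maxHeartbeats 1600000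



lemma sum_range_cast (T : ℕ) : ∑ t ∈ Finset.range T, (t:ℝ) = T*(T-1)/2 := by
  induction T with
  | zero => simp
  | succ T ih => rw [Finset.sum_range_succ, ih]; push_cast; ring

lemma sum_range_sq_cast (T : ℕ) : ∑ t ∈ Finset.range T, (t:ℝ)^2 = T*(T-1)*(2*T-1)/6 := by
  induction T with
  | zero => simp
  | succ T ih => rw [Finset.sum_range_succ, ih]; push_cast; ring

lemma sum_sub_sq_ge (T : ℕ) (m : ℝ) :
    (T:ℝ)*((T:ℝ)^2-1)/12 ≤ ∑ t ∈ Finset.range T, ((t:ℝ)-m)^2 := by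
  have hexp : ∑ t ∈ Finset.range T, ((t:ℝ)-m)^2
      = (∑ t ∈ Finset.range T, (t:ℝ)^2) - 2*m*(∑ t ∈ Finset.range T, (t:ℝ)) + T*m^2 := by
    rw [Finset.mul_sum, ← Finset.sum_sub_distrib]
    rw [show ((T:ℝ)*m^2) = ∑ _t ∈ Finset.range T, m^2 by
      rw [Finset.sum_const, Finset.card_range]; ring]
    rw [← Finset.sum_add_distrib]
    exact Finset.sum_congr rfl fun t _ => by ring
  rw [hexp, sum_range_cast, sum_range_sq_cast]
  rcases Nat.eq_zero_or_pos T with h | h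
  · subst h; norm_num
  · have hT : (1:ℝ) ≤ T := by exact_mod_cast h
    nlinarith [sq_nonneg ((T:ℝ)*m - T*(T-1)/2)]

section Graph
variable {n k : ℕ}

section FinFacts
variable [NeZero n] (hn : 3 ≤ n)
include hn

lemma val_one_fin : ((1 : Fin n) : ℕ) = 1 := by
  rw [Fin.val_one']; exact Nat.mod_eq_of_lt (by omega)

lemma val_add_one_fin (i : Fin n) : ((i + 1 : Fin n) : ℕ) = (i.val + 1) % n := by
  rw [Fin.add_def, val_one_fin hn]

lemma mod_succ_ne (i : Fin n) : (i.val + 1) % n ≠ i.val := by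
  have h1 : i.val < n := i.isLt
  rcases Nat.lt_or_ge (i.val + 1) n with h | h
  · rw [Nat.mod_eq_of_lt h]; omega
  · have : i.val + 1 = n := by omega
    rw [this, Nat.mod_self]; omega

lemma add_one_ne_fin (i : Fin n) : i + 1 ≠ i := by
  intro h
  exact mod_succ_ne hn i (by rw [← val_add_one_fin hn, h])

lemma add_two_ne_fin (i : Fin n) : i + 1 + 1 ≠ i := by
  intro h
  have h2 : ((i + 1 + 1 : Fin n) : ℕ) = ((i.val + 1) % n + 1) % n := by
    rw [val_add_one_fin hn, val_add_one_fin hn]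
  rw [h] at h2
  have h1 : i.val < n := i.isLt
  rcases Nat.lt_or_ge (i.val + 1) n with h' | h'
  · rw [Nat.mod_eq_of_lt h'] at h2
    rcases Nat.lt_or_ge (i.val + 2) n with h'' | h''
    · rw [Nat.mod_eq_of_lt h''] at h2; omega
    · have : i.val + 2 = n := by omega
      rw [this, Nat.mod_self] at h2; omega
  · have : i.val + 1 = n := by omega
    rw [this, Nat.mod_self, Nat.mod_eq_of_lt (by omega)] at h2
    omega
end FinFacts

section GraphFacts
variable [NeZero n] [NeZero k] (hn : 3 ≤ n) (hk : 2 ≤ k)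

lemma fin_val_zero_iff {m : ℕ} [NeZero m] (a : Fin m) : (a.val = 0 ↔ a = 0) := by
  constructor
  · intro h; exact Fin.ext (by simp [h])
  · intro h; simp [h]

include hn in
lemma adj_ring (i : Fin n) : (ringClique n k).Adj (i, 0) (i + 1, 0) := by
  refine ⟨?_, Or.inr ⟨by simp, by simp, Or.inl (val_add_one_fin hn i)⟩⟩
  intro h
  exact add_one_ne_fin hn i (congrArg Prod.fst h).symm

omit [NeZero n] [NeZero k] in
lemma adj_clique (i : Fin n) {a b : Fin k} (hab : a ≠ b) :
    (ringClique n k).Adj (i, a) (i, b) :=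
  ⟨fun h => hab (congrArg Prod.snd h), Or.inl rfl⟩

include hn hk in
lemma reachable_all (u v : Fin n × Fin k) : (ringClique n k).Reachable u v := by
  have hub : ∀ (i : Fin n) (t : ℕ), (ringClique n k).Reachable (i, 0) (i + (t : Fin n), 0) := by
    intro i t
    induction t with
    | zero => simpa using SimpleGraph.Reachable.refl _
    | succ t ih =>
      refine ih.trans ?_
      have : ((t+1 : ℕ) : Fin n) = (t : ℕ) + 1 := by push_cast; ring
      rw [this, ← add_assoc]
      exact (adj_ring hn (i + (t : Fin n))).reachable
  have hubij : ∀ i j : Fin n, (ringClique n k).Reachable (i, 0) (j, 0) := by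
    intro i j
    have := hub i (j - i).val
    rwa [Fin.cast_val_eq_self, add_sub_cancel] at this
  have leg : ∀ w : Fin n × Fin k, (ringClique n k).Reachable w (w.1, 0) := by
    intro w
    rcases eq_or_ne w.2 0 with h | h
    · rw [show w = (w.1, (0:Fin k)) from Prod.ext rfl h]
    · exact (adj_clique w.1 h).reachable
  exact (leg u).trans ((hubij u.1 v.1).trans (leg v).symm)
end GraphFacts
end Graph


section Poincare
variable {n : ℕ} [NeZero n]

lemma cycle_pair_bound (h : Fin n → ℝ) (i j : Fin n) :
    (h j - h i)^2 ≤ n * ∑ p : Fin n, (h (p+1) - h p)^2 := by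
  classical
  set D := ∑ p : Fin n, (h (p+1) - h p)^2 with hD
  have hD0 : 0 ≤ D := Finset.sum_nonneg fun p _ => sq_nonneg _
  set m := (j - i).val with hm
  have tel := Finset.sum_range_sub (fun t => h (i + (t : Fin n))) m
  have e1 : i + ((m : ℕ) : Fin n) = j := by
    rw [hm, Fin.cast_val_eq_self]; ring
  have e2 : i + ((0 : ℕ) : Fin n) = i := by simp
  rw [e1, e2] at tel
  have cs : (h j - h i)^2 ≤ m * ∑ t ∈ Finset.range m,
      (h (i + ((t+1 : ℕ) : Fin n)) - h (i + (t : Fin n)))^2 := by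
    rw [← tel]
    simpa using sq_sum_le_card_mul_sum_sq
      (s := Finset.range m) (f := fun t => h (i + ((t+1 : ℕ) : Fin n)) - h (i + (t : Fin n)))
  have hsub : ∑ t ∈ Finset.range m,
      (h (i + ((t+1 : ℕ) : Fin n)) - h (i + (t : Fin n)))^2
      ≤ ∑ t ∈ Finset.range n,
      (h (i + ((t+1 : ℕ) : Fin n)) - h (i + (t : Fin n)))^2 := by
    refine Finset.sum_le_sum_of_subset_of_nonneg ?_ (fun t _ _ => sq_nonneg _)
    exact Finset.range_subset_range.mpr (le_of_lt (j - i).isLt)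
  have hre : ∑ t ∈ Finset.range n,
      (h (i + ((t+1 : ℕ) : Fin n)) - h (i + (t : Fin n)))^2 = D := by
    rw [← Fin.sum_univ_eq_sum_range (fun t : ℕ =>
      (h (i + ((t+1 : ℕ) : Fin n)) - h (i + (t : Fin n)))^2) n]
    rw [hD]
    refine Fintype.sum_equiv (Equiv.addLeft i) _ _ fun p => ?_
    have c1 : ((((p : ℕ) + 1 : ℕ)) : Fin n) = p + 1 := by
      push_cast [Fin.cast_val_eq_self]; ring
    have c2 : (((p : ℕ) : ℕ) : Fin n) = p := Fin.cast_val_eq_self p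
    rw [c1, c2, ← add_assoc]
    rfl
  have hmn : (m : ℝ) ≤ n := by exact_mod_cast le_of_lt (j - i).isLt
  calc (h j - h i)^2 ≤ m * ∑ t ∈ Finset.range m,
      (h (i + ((t+1 : ℕ) : Fin n)) - h (i + (t : Fin n)))^2 := cs
    _ ≤ m * D := by
        refine mul_le_mul_of_nonneg_left ?_ (by positivity)
        rw [← hre]; exact hsub
    _ ≤ n * D := mul_le_mul_of_nonneg_right hmn hD0

lemma cycle_poincare (hn : 1 ≤ n) (h : Fin n → ℝ) :
    ∑ i : Fin n, (h i - (∑ j : Fin n, h j)/n)^2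
      ≤ n^2/2 * ∑ p : Fin n, (h (p+1) - h p)^2 := by
  classical
  set D := ∑ p : Fin n, (h (p+1) - h p)^2 with hD
  have hD0 : 0 ≤ D := Finset.sum_nonneg fun p _ => sq_nonneg _
  have hn0 : (0:ℝ) < n := by exact_mod_cast hn
  set S1 := ∑ j : Fin n, h j with hS1
  set S2 := ∑ j : Fin n, (h j)^2 with hS2
  have lhs_eq : ∑ i : Fin n, (h i - S1/n)^2 = S2 - S1^2/n := by
    have : ∀ i : Fin n, (h i - S1/n)^2 = (h i)^2 - 2*(S1/n)*(h i) + (S1/n)^2 := fun i => by ring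
    rw [Finset.sum_congr rfl fun i _ => this i]
    rw [Finset.sum_add_distrib, Finset.sum_sub_distrib, ← Finset.mul_sum, Finset.sum_const,
      Finset.card_univ, Fintype.card_fin, ← hS1, ← hS2]
    field_simp
    have hnn : (n:ℝ)^2 * ((n:ℝ))⁻¹^2 = 1 := by rw [← mul_pow, mul_inv_cancel₀ hn0.ne', one_pow]
    linear_combination S1^2 * hnn
  have rhs_eq : ∑ i : Fin n, ∑ j : Fin n, (h i - h j)^2 = 2*n*S2 - 2*S1^2 := by
    have inner : ∀ i : Fin n, ∑ j : Fin n, (h i - h j)^2 = n*(h i)^2 - 2*(h i)*S1 + S2 := by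
      intro i
      have : ∀ j : Fin n, (h i - h j)^2 = (h i)^2 - 2*(h i)*(h j) + (h j)^2 := fun j => by ring
      rw [Finset.sum_congr rfl fun j _ => this j, Finset.sum_add_distrib,
        Finset.sum_sub_distrib, ← Finset.mul_sum, Finset.sum_const, Finset.card_univ,
        Fintype.card_fin, ← hS1, ← hS2]
      ring
    rw [Finset.sum_congr rfl fun i _ => inner i, Finset.sum_add_distrib,
      Finset.sum_sub_distrib, ← Finset.sum_mul, Finset.sum_const, Finset.card_univ,
      Fintype.card_fin]
    have e1 : ∑ x : Fin n, (n:ℝ) * h x ^ 2 = (n:ℝ) * S2 := by rw [hS2, Finset.mul_sum]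
    have e2 : ∑ i : Fin n, 2 * h i = 2 * S1 := by rw [hS1, Finset.mul_sum]
    rw [e1, e2, nsmul_eq_mul]
    ring
  have pairs : ∑ i : Fin n, ∑ j : Fin n, (h i - h j)^2 ≤ n * n * (n * D) := by
    calc ∑ i : Fin n, ∑ j : Fin n, (h i - h j)^2
        ≤ ∑ _i : Fin n, ∑ _j : Fin n, n * D :=
          Finset.sum_le_sum fun i _ => Finset.sum_le_sum fun j _ => by
            have := cycle_pair_bound h j i
            simpa using this
      _ = n * n * (n * D) := by
          simp [Finset.sum_const, Finset.card_univ, Fintype.card_fin]; ring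
  rw [lhs_eq]
  have h2 : 2*n*S2 - 2*S1^2 ≤ n*n*(n*D) := by rw [← rhs_eq]; exact pairs
  have key : 2*(n:ℝ)*(S2 - S1^2/n) = 2*n*S2 - 2*S1^2 := by field_simp
  have h3 : 2*(n:ℝ)*(S2 - S1^2/n) ≤ 2*(n:ℝ)*(n^2/2*D) := by
    rw [key]
    calc 2*(n:ℝ)*S2 - 2*S1^2 ≤ n*n*(n*D) := h2
      _ = 2*(n:ℝ)*(n^2/2*D) := by ring
  exact le_of_mul_le_mul_left h3 (by positivity)
end Poincare

section Graph2
variable {n k : ℕ}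
section GraphFacts
variable [NeZero n] [NeZero k] (hn : 3 ≤ n) (hk : 2 ≤ k)

lemma adj_iff {u w : Fin n × Fin k} : (ringClique n k).Adj u w ↔ u ≠ w ∧ (u.1 = w.1 ∨
    (u.2.val = 0 ∧ w.2.val = 0 ∧
      (w.1.val = (u.1.val + 1) % n ∨ u.1.val = (w.1.val + 1) % n))) := Iff.rfl

include hn hk in
lemma degree_le_rc (v : Fin n × Fin k) : (ringClique n k).degree v ≤ k + 2 := by
  classical
  rw [← SimpleGraph.card_neighborFinset_eq_degree]
  have hsub : (ringClique n k).neighborFinset v ⊆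
      (Finset.univ.image fun b : Fin k => (v.1, b)) ∪ {(v.1 + 1, 0), (v.1 - 1, 0)} := by
    intro w hw
    rw [SimpleGraph.mem_neighborFinset, adj_iff] at hw
    obtain ⟨hne, hcase⟩ := hw
    rcases hcase with h | ⟨h1, h2, h3⟩
    · exact Finset.mem_union_left _
        (Finset.mem_image.mpr ⟨w.2, Finset.mem_univ _, by rw [h]⟩)
    · apply Finset.mem_union_right
      have hw2 : w.2 = 0 := (fin_val_zero_iff w.2).mp h2
      rcases h3 with h4 | h4
      · have hw1 : w.1 = v.1 + 1 := Fin.ext (h4.trans (val_add_one_fin hn v.1).symm)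
        simp only [Finset.mem_insert, Finset.mem_singleton]
        exact Or.inl (Prod.ext hw1 hw2)
      · have h5 : v.1 = w.1 + 1 := Fin.ext (h4.trans (val_add_one_fin hn w.1).symm)
        have hw1 : w.1 = v.1 - 1 := by rw [h5]; ring
        simp only [Finset.mem_insert, Finset.mem_singleton]
        exact Or.inr (Prod.ext hw1 hw2)
  have h1 : ((Finset.univ.image fun b : Fin k => (v.1, b))).card ≤ k := by
    refine (Finset.card_image_le).trans ?_
    simp
  have h2 : ({(v.1 + 1, (0:Fin k)), (v.1 - 1, 0)} : Finset (Fin n × Fin k)).card ≤ 2 := by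
    refine (Finset.card_insert_le _ _).trans ?_
    simp
  calc ((ringClique n k).neighborFinset v).card
      ≤ _ := Finset.card_le_card hsub
    _ ≤ _ := Finset.card_union_le _ _
    _ ≤ k + 2 := by omega

omit [NeZero n] [NeZero k] in
lemma degree_ge_rc (v : Fin n × Fin k) : k - 1 ≤ (ringClique n k).degree v := by
  classical
  rw [← SimpleGraph.card_neighborFinset_eq_degree]
  have hsub : ((Finset.univ.erase v.2).image fun b => (v.1, b)) ⊆
      (ringClique n k).neighborFinset v := by
    intro w hw
    obtain ⟨b, hb, rfl⟩ := Finset.mem_image.mp hw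
    rw [SimpleGraph.mem_neighborFinset]
    have hbv : b ≠ v.2 := Finset.ne_of_mem_erase hb
    have hv : v = (v.1, v.2) := rfl
    rw [hv]
    exact adj_clique v.1 (fun h => hbv h.symm)
  have hcard : ((Finset.univ.erase v.2).image fun b => (v.1, b)).card = k - 1 := by
    rw [Finset.card_image_of_injective _ (fun a b h => by simpa using congrArg Prod.snd h),
      Finset.card_erase_of_mem (Finset.mem_univ _), Finset.card_univ, Fintype.card_fin]
  calc k - 1 = _ := hcard.symm
    _ ≤ _ := Finset.card_le_card hsub

include hn in
lemma quad_lower (x : Fin n × Fin k → ℝ) :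
    2 * ((∑ i : Fin n, ∑ a : Fin k, (x (i,a) - x (i,0))^2)
        + ∑ i : Fin n, (x (i+1,0) - x (i,0))^2)
      ≤ ∑ u : Fin n × Fin k, ∑ v : Fin n × Fin k,
          if (ringClique n k).Adj u v then (x u - x v)^2 else 0 := by
  classical
  set g1 : (Fin n × Fin k) → (Fin n × Fin k) → ℝ :=
    fun u v => if u.2 ≠ 0 ∧ v = (u.1, (0:Fin k)) then (x u - x (u.1, 0))^2 else 0 with hg1
  set g3 : (Fin n × Fin k) → (Fin n × Fin k) → ℝ :=
    fun u v => if u.2 = 0 ∧ v = (u.1 + 1, (0:Fin k)) then (x u - x (u.1 + 1, 0))^2 else 0 with hg3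
  have key : ∀ u v : Fin n × Fin k,
      g1 u v + g1 v u + g3 u v + g3 v u
        ≤ (if (ringClique n k).Adj u v then (x u - x v)^2 else 0) := by
    intro u v
    by_cases h1 : u.2 ≠ 0 ∧ v = (u.1, (0:Fin k))
    · have hadj : (ringClique n k).Adj u v := by
        rw [h1.2]
        have hu : u = (u.1, u.2) := rfl
        rw [hu]
        exact adj_clique u.1 h1.1
      have h2 : ¬ (v.2 ≠ 0 ∧ u = (v.1, (0:Fin k))) := by
        rintro ⟨hv2, -⟩; exact hv2 (by rw [h1.2])
      have h3 : ¬ (u.2 = 0 ∧ v = (u.1 + 1, (0:Fin k))) := by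
        rintro ⟨hu2, -⟩; exact h1.1 hu2
      have h4 : ¬ (v.2 = 0 ∧ u = (v.1 + 1, (0:Fin k))) := by
        rintro ⟨-, hu⟩
        exact h1.1 (Prod.ext_iff.mp hu).2
      simp only [hg1, hg3, if_pos h1, if_neg h2, if_neg h3, if_neg h4, if_pos hadj]
      have : x (u.1, 0) = x v := by rw [h1.2]
      rw [this]; linarith
    · by_cases h2 : v.2 ≠ 0 ∧ u = (v.1, (0:Fin k))
      · have hadj : (ringClique n k).Adj u v := by
          refine SimpleGraph.adj_symm _ ?_
          rw [h2.2]
          have hv : v = (v.1, v.2) := rfl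
          rw [hv]
          exact adj_clique v.1 h2.1
        have h3 : ¬ (u.2 = 0 ∧ v = (u.1 + 1, (0:Fin k))) := by
          rintro ⟨-, hv⟩
          exact h2.1 (Prod.ext_iff.mp hv).2
        have h4 : ¬ (v.2 = 0 ∧ u = (v.1 + 1, (0:Fin k))) := by
          rintro ⟨hv2, -⟩; exact h2.1 hv2
        simp only [hg1, hg3, if_neg h1, if_pos h2, if_neg h3, if_neg h4, if_pos hadj]
        have : x (v.1, 0) = x u := by rw [h2.2]
        rw [this]; nlinarith [sq_nonneg (x v - x u), sq_nonneg (x u - x v)]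
      · by_cases h3 : u.2 = 0 ∧ v = (u.1 + 1, (0:Fin k))
        · have hadj : (ringClique n k).Adj u v := by
            rw [h3.2, show u = (u.1, u.2) from rfl, h3.1]
            exact adj_ring hn u.1
          have h4 : ¬ (v.2 = 0 ∧ u = (v.1 + 1, (0:Fin k))) := by
            rintro ⟨-, hu⟩
            have hv1 : v.1 = u.1 + 1 := (Prod.ext_iff.mp h3.2).1
            have hu1 : u.1 = v.1 + 1 := (Prod.ext_iff.mp hu).1
            rw [hv1] at hu1
            exact add_two_ne_fin hn u.1 hu1.symm
          simp only [hg1, hg3, if_neg h1, if_neg h2, if_pos h3, if_neg h4, if_pos hadj]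
          have : x (u.1 + 1, 0) = x v := by rw [h3.2]
          rw [this]; linarith
        · by_cases h4 : v.2 = 0 ∧ u = (v.1 + 1, (0:Fin k))
          · have hadj : (ringClique n k).Adj u v := by
              refine SimpleGraph.adj_symm _ ?_
              rw [h4.2, show v = (v.1, v.2) from rfl, h4.1]
              exact adj_ring hn v.1
            simp only [hg1, hg3, if_neg h1, if_neg h2, if_neg h3, if_pos h4, if_pos hadj]
            have : x (v.1 + 1, 0) = x u := by rw [h4.2]
            rw [this]; nlinarith [sq_nonneg (x v - x u), sq_nonneg (x u - x v)]
          · simp only [hg1, hg3, if_neg h1, if_neg h2, if_neg h3, if_neg h4]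
            split_ifs with h
            · have := sq_nonneg (x u - x v); linarith
            · simp
  have hsum : ∀ (g : (Fin n × Fin k) → (Fin n × Fin k) → ℝ),
      (∑ u : Fin n × Fin k, ∑ v : Fin n × Fin k, g v u)
        = ∑ u : Fin n × Fin k, ∑ v : Fin n × Fin k, g u v := fun g => Finset.sum_comm
  have hs1 : (∑ u : Fin n × Fin k, ∑ v : Fin n × Fin k, g1 u v)
      = ∑ i : Fin n, ∑ a : Fin k, (x (i,a) - x (i,0))^2 := by
    have inner : ∀ u : Fin n × Fin k, (∑ v : Fin n × Fin k, g1 u v)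
        = if u.2 ≠ 0 then (x u - x (u.1, 0))^2 else 0 := by
      intro u
      rw [show (∑ v : Fin n × Fin k, g1 u v)
          = ∑ v : Fin n × Fin k, if v = (u.1, (0:Fin k)) then
              (if u.2 ≠ 0 then (x u - x (u.1, 0))^2 else 0) else 0 by
        refine Finset.sum_congr rfl fun v _ => ?_
        simp only [hg1]
        by_cases hv : v = (u.1, (0:Fin k)) <;> by_cases hu : u.2 ≠ 0 <;> simp [hv, hu]]
      rw [Finset.sum_ite_eq' Finset.univ ((u.1, (0:Fin k))) _]
      simp
    rw [Finset.sum_congr rfl fun u _ => inner u, Fintype.sum_prod_type]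
    refine Finset.sum_congr rfl fun i _ => Finset.sum_congr rfl fun a _ => ?_
    by_cases ha : a = 0 <;> simp [ha]
  have hs3 : (∑ u : Fin n × Fin k, ∑ v : Fin n × Fin k, g3 u v)
      = ∑ i : Fin n, (x (i+1,0) - x (i,0))^2 := by
    have inner : ∀ u : Fin n × Fin k, (∑ v : Fin n × Fin k, g3 u v)
        = if u.2 = 0 then (x u - x (u.1 + 1, 0))^2 else 0 := by
      intro u
      rw [show (∑ v : Fin n × Fin k, g3 u v)
          = ∑ v : Fin n × Fin k, if v = (u.1 + 1, (0:Fin k)) then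
              (if u.2 = 0 then (x u - x (u.1 + 1, 0))^2 else 0) else 0 by
        refine Finset.sum_congr rfl fun v _ => ?_
        simp only [hg3]
        by_cases hv : v = (u.1 + 1, (0:Fin k)) <;> by_cases hu : u.2 = 0 <;> simp [hv, hu]]
      rw [Finset.sum_ite_eq' Finset.univ ((u.1 + 1, (0:Fin k))) _]
      simp
    rw [Finset.sum_congr rfl fun u _ => inner u, Fintype.sum_prod_type]
    refine Finset.sum_congr rfl fun i _ => ?_
    rw [Finset.sum_ite_eq' Finset.univ (0 : Fin k) _]
    simp only [Finset.mem_univ, if_pos]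
    rw [← neg_sub, neg_sq]
  calc 2 * ((∑ i : Fin n, ∑ a : Fin k, (x (i,a) - x (i,0))^2)
        + ∑ i : Fin n, (x (i+1,0) - x (i,0))^2)
      = ∑ u : Fin n × Fin k, ∑ v : Fin n × Fin k, (g1 u v + g1 v u + g3 u v + g3 v u) := by
        simp only [Finset.sum_add_distrib]
        rw [hsum g1, hsum g3, hs1, hs3]; ring
    _ ≤ _ := Finset.sum_le_sum fun u _ => Finset.sum_le_sum fun v _ => key u v
end GraphFacts
end Graph2

section Graph3
variable {n k : ℕ}
section GraphFacts
variable [NeZero n] [NeZero k] (hn : 3 ≤ n) (hk : 2 ≤ k)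

include hn hk in
lemma norm_bound (x : Fin n × Fin k → ℝ)
    (hsum : ∑ u : Fin n × Fin k, x u = 0) :
    ∑ u : Fin n × Fin k, (x u)^2 ≤ ((k:ℝ)*(n:ℝ)^2) *
      ((∑ i : Fin n, ∑ a : Fin k, (x (i,a) - x (i,0))^2)
        + ∑ i : Fin n, (x (i+1,0) - x (i,0))^2) := by
  classical
  have hk0 : (0:ℝ) < k := by exact_mod_cast (by omega : 0 < k)
  have hn0 : (0:ℝ) < n := by exact_mod_cast (by omega : 0 < n)
  set Qc := ∑ i : Fin n, ∑ a : Fin k, (x (i,a) - x (i,0))^2 with hQc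
  set D := ∑ i : Fin n, (x (i+1,0) - x (i,0))^2 with hDdef
  have hQc0 : 0 ≤ Qc := Finset.sum_nonneg fun i _ => Finset.sum_nonneg fun a _ => sq_nonneg _
  have hD0 : 0 ≤ D := Finset.sum_nonneg fun i _ => sq_nonneg _
  set S1 := ∑ i : Fin n, x (i,0) with hS1
  have stepA : ∑ u : Fin n × Fin k, (x u)^2
      ≤ 2*Qc + 2*(k:ℝ)*∑ i : Fin n, (x (i,0))^2 := by
    rw [Fintype.sum_prod_type]
    have pt : ∀ (i : Fin n) (a : Fin k),
        (x (i,a))^2 ≤ 2*(x (i,a) - x (i,0))^2 + 2*(x (i,0))^2 := by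
      intro i a; nlinarith [sq_nonneg (x (i,a) - 2*x (i,0))]
    calc ∑ i : Fin n, ∑ a : Fin k, (x (i,a))^2
        ≤ ∑ i : Fin n, ∑ a : Fin k, (2*(x (i,a) - x (i,0))^2 + 2*(x (i,0))^2) :=
          Finset.sum_le_sum fun i _ => Finset.sum_le_sum fun a _ => pt i a
      _ = 2*Qc + 2*(k:ℝ)*∑ i : Fin n, (x (i,0))^2 := by
          have inner : ∀ i : Fin n,
              ∑ a : Fin k, (2*(x (i,a) - x (i,0))^2 + 2*(x (i,0))^2)
              = 2*(∑ a : Fin k, (x (i,a) - x (i,0))^2) + (k:ℝ)*(2*(x (i,0))^2) := by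
            intro i
            rw [Finset.sum_add_distrib, ← Finset.mul_sum, Finset.sum_const,
              Finset.card_univ, Fintype.card_fin, nsmul_eq_mul]
          rw [Finset.sum_congr rfl fun i _ => inner i, Finset.sum_add_distrib]
          have eA : ∑ i : Fin n, 2*(∑ a : Fin k, (x (i,a) - x (i,0))^2) = 2*Qc := by
            rw [hQc, Finset.mul_sum]
          have eB : ∑ i : Fin n, (k:ℝ)*(2*(x (i,0))^2)
              = 2*(k:ℝ)*∑ i : Fin n, (x (i,0))^2 := by
            rw [Finset.mul_sum]
            exact Finset.sum_congr rfl fun i _ => by ring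
          rw [eA, eB]
  have stepC : S1^2 ≤ ((n:ℝ)/k) * Qc := by
    have e0 : ∑ u : Fin n × Fin k, (x u - x (u.1, 0)) = - ((k:ℝ) * S1) := by
      rw [Finset.sum_sub_distrib, hsum]
      rw [Fintype.sum_prod_type]
      have e1 : ∀ i : Fin n, ∑ _a : Fin k, x (i, 0) = (k:ℝ) * x (i,0) := by
        intro i
        rw [Finset.sum_const, Finset.card_univ, Fintype.card_fin, nsmul_eq_mul]
      rw [Finset.sum_congr rfl fun i _ => e1 i, ← Finset.mul_sum, ← hS1]
      ring
    have cs : (∑ u : Fin n × Fin k, (x u - x (u.1, 0)))^2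
        ≤ ((n:ℝ)*k) * ∑ u : Fin n × Fin k, (x u - x (u.1, 0))^2 := by
      have h := sq_sum_le_card_mul_sum_sq (s := (Finset.univ : Finset (Fin n × Fin k)))
        (f := fun u => x u - x (u.1, 0))
      rwa [Finset.card_univ, Fintype.card_prod, Fintype.card_fin, Fintype.card_fin,
        Nat.cast_mul] at h
    have eQ : ∑ u : Fin n × Fin k, (x u - x (u.1, 0))^2 = Qc := by
      rw [Fintype.sum_prod_type, hQc]
    rw [e0, eQ] at cs
    have cs' : (k:ℝ)^2 * S1^2 ≤ (n:ℝ)*k*Qc := by nlinarith [cs]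
    rw [div_mul_eq_mul_div, le_div_iff₀ hk0]
    nlinarith [cs']
  have stepB : ∑ i : Fin n, (x (i,0))^2 ≤ (n:ℝ)^2/2 * D + S1^2/n := by
    have hp := cycle_poincare (show 1 ≤ n by omega) (fun i : Fin n => x (i,0))
    have expand : ∑ i : Fin n, (x (i,0))^2
        = ∑ i : Fin n, (x (i,0) - S1/n)^2 + S1^2/n := by
      have pt : ∀ i : Fin n, (x (i,0) - S1/n)^2
          = (x (i,0))^2 - 2*(S1/n)*(x (i,0)) + (S1/n)^2 := fun i => by ring
      rw [Finset.sum_congr rfl fun i _ => pt i, Finset.sum_add_distrib,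
        Finset.sum_sub_distrib, ← Finset.mul_sum, Finset.sum_const, Finset.card_univ,
        Fintype.card_fin, ← hS1, nsmul_eq_mul]
      field_simp
      ring
    rw [expand]
    have hle : ∑ i : Fin n, (x (i,0) - S1/n)^2 ≤ (n:ℝ)^2/2 * D := by
      rw [hS1, hDdef]; exact hp
    linarith
  have hS1n : S1^2/n ≤ Qc/k := by
    rw [div_le_div_iff₀ hn0 hk0]
    have h1 : S1^2*(k:ℝ) ≤ ((n:ℝ)/k)*Qc*(k:ℝ) := mul_le_mul_of_nonneg_right stepC hk0.le
    have h2 : ((n:ℝ)/k)*Qc*(k:ℝ) = Qc*(n:ℝ) := by field_simp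
    rw [h2] at h1
    exact h1
  have total : ∑ u : Fin n × Fin k, (x u)^2 ≤ 4*Qc + (k:ℝ)*(n:ℝ)^2*D := by
    calc ∑ u : Fin n × Fin k, (x u)^2
        ≤ 2*Qc + 2*(k:ℝ)*∑ i : Fin n, (x (i,0))^2 := stepA
      _ ≤ 2*Qc + 2*(k:ℝ)*((n:ℝ)^2/2 * D + S1^2/n) := by
          have := mul_le_mul_of_nonneg_left stepB (by positivity : (0:ℝ) ≤ 2*(k:ℝ))
          linarith
      _ ≤ 2*Qc + 2*(k:ℝ)*((n:ℝ)^2/2 * D + Qc/k) := by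
          have h3 : (n:ℝ)^2/2 * D + S1^2/n ≤ (n:ℝ)^2/2 * D + Qc/k := by linarith [hS1n]
          have := mul_le_mul_of_nonneg_left h3 (by positivity : (0:ℝ) ≤ 2*(k:ℝ))
          linarith
      _ = 4*Qc + (k:ℝ)*(n:ℝ)^2*D := by field_simp; ring
  have hkn4 : (4:ℝ) ≤ (k:ℝ)*(n:ℝ)^2 := by
    have hk2 : (2:ℝ) ≤ k := by exact_mod_cast hk
    have hn3 : (3:ℝ) ≤ n := by exact_mod_cast hn
    nlinarith
  nlinarith [total, hQc0, hD0, hkn4]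

include hn hk in
lemma quad_upper (w : Fin n → ℝ)
    (hlip : ∀ i : Fin n, (w (i+1) - w i)^2 ≤ 1) :
    ∑ u : Fin n × Fin k, ∑ v : Fin n × Fin k,
      (if (ringClique n k).Adj u v then ((w u.1) - (w v.1))^2 else 0) ≤ 2*(n:ℝ) := by
  classical
  set F : (Fin n × Fin k) → (Fin n × Fin k) → ℝ :=
    fun u v => if u.2 = 0 ∧ v = (u.1+1, (0:Fin k)) then 1 else 0 with hF
  have hF0 : ∀ a b, (0:ℝ) ≤ F a b := by
    intro a b; rw [hF]; dsimp only; split_ifs <;> norm_num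
  have key : ∀ u v : Fin n × Fin k,
      (if (ringClique n k).Adj u v then ((w u.1) - (w v.1))^2 else 0) ≤ F u v + F v u := by
    intro u v
    by_cases hadj : (ringClique n k).Adj u v
    · rw [if_pos hadj]
      rcases hadj.2 with hsame | ⟨h1, h2, h3⟩
      · rw [hsame]
        simpa using add_nonneg (hF0 u v) (hF0 v u)
      · rcases h3 with h4 | h4
        · have hv : v = (u.1 + 1, (0:Fin k)) :=
            Prod.ext (Fin.ext (h4.trans (val_add_one_fin hn u.1).symm))
              ((fin_val_zero_iff v.2).mp h2)
          have hFuv : F u v = 1 := by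
            rw [hF]; exact if_pos ⟨(fin_val_zero_iff u.2).mp h1, hv⟩
          have hw : ((w u.1) - (w v.1))^2 ≤ 1 := by
            rw [hv]
            calc (w u.1 - w (u.1+1))^2 = (w (u.1+1) - w u.1)^2 := by ring
              _ ≤ 1 := hlip u.1
          calc ((w u.1) - (w v.1))^2 ≤ 1 := hw
            _ ≤ F u v + F v u := by rw [hFuv]; linarith [hF0 v u]
        · have hu : u = (v.1 + 1, (0:Fin k)) :=
            Prod.ext (Fin.ext (h4.trans (val_add_one_fin hn v.1).symm))
              ((fin_val_zero_iff u.2).mp h1)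
          have hFvu : F v u = 1 := by
            rw [hF]; exact if_pos ⟨(fin_val_zero_iff v.2).mp h2, hu⟩
          have hw : ((w u.1) - (w v.1))^2 ≤ 1 := by
            rw [hu]
            exact hlip v.1
          calc ((w u.1) - (w v.1))^2 ≤ 1 := hw
            _ ≤ F u v + F v u := by rw [hFvu]; linarith [hF0 u v]
    · rw [if_neg hadj]; exact add_nonneg (hF0 u v) (hF0 v u)
  have hFsum : ∑ u : Fin n × Fin k, ∑ v : Fin n × Fin k, F u v = n := by
    have inner : ∀ u : Fin n × Fin k,
        (∑ v : Fin n × Fin k, F u v) = if u.2 = 0 then 1 else 0 := by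
      intro u
      rw [show (∑ v : Fin n × Fin k, F u v)
          = ∑ v : Fin n × Fin k, if v = (u.1 + 1, (0:Fin k)) then
              (if u.2 = 0 then (1:ℝ) else 0) else 0 by
        refine Finset.sum_congr rfl fun v _ => ?_
        rw [hF]; dsimp only
        by_cases hv : v = (u.1 + 1, (0:Fin k)) <;> by_cases hu : u.2 = 0 <;> simp [hv, hu]]
      rw [Finset.sum_ite_eq' Finset.univ ((u.1 + 1, (0:Fin k))) _]
      simp
    rw [Finset.sum_congr rfl fun u _ => inner u, Fintype.sum_prod_type]
    have inner2 : ∀ i : Fin n, (∑ a : Fin k, if (a : Fin k) = 0 then (1:ℝ) else 0) = 1 := by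
      intro i
      rw [Finset.sum_ite_eq' Finset.univ (0 : Fin k) (fun _ => (1:ℝ))]
      simp
    rw [Finset.sum_congr rfl fun i _ => inner2 i, Finset.sum_const, Finset.card_univ,
      Fintype.card_fin, nsmul_eq_mul, mul_one]
  have swap : ∑ u : Fin n × Fin k, ∑ v : Fin n × Fin k, F v u
      = ∑ u : Fin n × Fin k, ∑ v : Fin n × Fin k, F u v := Finset.sum_comm
  calc ∑ u : Fin n × Fin k, ∑ v : Fin n × Fin k,
      (if (ringClique n k).Adj u v then ((w u.1) - (w v.1))^2 else 0)
      ≤ ∑ u : Fin n × Fin k, ∑ v : Fin n × Fin k, (F u v + F v u) :=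
        Finset.sum_le_sum fun u _ => Finset.sum_le_sum fun v _ => key u v
    _ = 2*(n:ℝ) := by
        simp only [Finset.sum_add_distrib]
        rw [swap, hFsum]; ring
end GraphFacts
end Graph3

section TestVec
variable {n : ℕ} [NeZero n]

lemma g_lip (hn : 3 ≤ n) (i : Fin n) :
    (((min (i+1).val (n - (i+1).val) : ℕ) : ℝ) - ((min i.val (n - i.val) : ℕ) : ℝ))^2 ≤ 1 := by
  have hi : i.val < n := i.isLt
  have hv : (i+1).val = (i.val + 1) % n := val_add_one_fin hn i
  rcases Nat.lt_or_ge (i.val + 1) n with hlt | hge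
  · rw [hv, Nat.mod_eq_of_lt hlt]
    have h1 : min (i.val+1) (n - (i.val+1)) ≤ min i.val (n - i.val) + 1 := by omega
    have h2 : min i.val (n - i.val) ≤ min (i.val+1) (n - (i.val+1)) + 1 := by omega
    have c1 : ((min (i.val+1) (n - (i.val+1)) : ℕ) : ℝ)
        ≤ ((min i.val (n - i.val) : ℕ) : ℝ) + 1 := by exact_mod_cast h1
    have c2 : ((min i.val (n - i.val) : ℕ) : ℝ)
        ≤ ((min (i.val+1) (n - (i.val+1)) : ℕ) : ℝ) + 1 := by exact_mod_cast h2
    nlinarith [c1, c2]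
  · have hn1 : i.val + 1 = n := by omega
    rw [hv, hn1, Nat.mod_self]
    have e1 : min 0 (n - 0) = 0 := by omega
    have e2 : min i.val (n - i.val) = 1 := by omega
    rw [e1, e2]
    norm_num

lemma gvar (hn : 3 ≤ n) (m : ℝ) :
    (n:ℝ)^3/144 ≤ ∑ i : Fin n, (((min i.val (n - i.val) : ℕ) : ℝ) - m)^2 := by
  classical
  set T := n/2 + 1 with hT
  have hTn : T ≤ n := by omega
  have hstep1 : ∑ i : Fin n, (((min i.val (n - i.val) : ℕ) : ℝ) - m)^2
      = ∑ t ∈ Finset.range n, (((min t (n - t) : ℕ) : ℝ) - m)^2 :=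
    Fin.sum_univ_eq_sum_range (fun t : ℕ => (((min t (n - t) : ℕ) : ℝ) - m)^2) n
  have hstep2 : ∑ t ∈ Finset.range T, (((min t (n - t) : ℕ) : ℝ) - m)^2
      ≤ ∑ t ∈ Finset.range n, (((min t (n - t) : ℕ) : ℝ) - m)^2 :=
    Finset.sum_le_sum_of_subset_of_nonneg (Finset.range_subset_range.mpr hTn)
      (fun t _ _ => sq_nonneg _)
  have hstep3 : ∑ t ∈ Finset.range T, (((min t (n - t) : ℕ) : ℝ) - m)^2
      = ∑ t ∈ Finset.range T, ((t:ℝ) - m)^2 := by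
    refine Finset.sum_congr rfl fun t ht => ?_
    have ht' : t < T := Finset.mem_range.mp ht
    have hmin : min t (n - t) = t := by omega
    rw [hmin]
  have hstep4 := sum_sub_sq_ge T m
  set q := n/2 with hq
  have p1 : (n:ℝ) ≤ 2*((q:ℝ)+1) := by
    have h : n ≤ 2*(q+1) := by omega
    exact_mod_cast h
  have p2 : (n:ℝ) ≤ 3*(q:ℝ) := by
    have h : n ≤ 3*q := by omega
    exact_mod_cast h
  have p3 : (n:ℝ) ≤ 2*((q:ℝ)+2) := by
    have h : n ≤ 2*(q+2) := by omega
    exact_mod_cast h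
  have hn0 : (0:ℝ) ≤ n := by positivity
  have hq0 : (0:ℝ) ≤ q := by positivity
  have m1 : (n:ℝ)*n ≤ (2*((q:ℝ)+1))*(3*(q:ℝ)) := mul_le_mul p1 p2 hn0 (by positivity)
  have m2 : ((n:ℝ)*n)*n ≤ ((2*((q:ℝ)+1))*(3*(q:ℝ)))*(2*((q:ℝ)+2)) :=
    mul_le_mul m1 p3 hn0 (by positivity)
  have hTq : (T:ℝ) = (q:ℝ) + 1 := by rw [hT]; push_cast; ring
  have final : (n:ℝ)^3/144 ≤ (T:ℝ)*((T:ℝ)^2-1)/12 := by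
    rw [hTq]
    nlinarith [m2]
  calc (n:ℝ)^3/144 ≤ (T:ℝ)*((T:ℝ)^2-1)/12 := final
    _ ≤ ∑ t ∈ Finset.range T, ((t:ℝ) - m)^2 := hstep4
    _ = ∑ t ∈ Finset.range T, (((min t (n - t) : ℕ) : ℝ) - m)^2 := hstep3.symm
    _ ≤ ∑ t ∈ Finset.range n, (((min t (n - t) : ℕ) : ℝ) - m)^2 := hstep2
    _ = _ := hstep1.symm
end TestVec

section Spectral
variable {N : Type*} [Fintype N] [DecidableEq N]

lemma eigenvalue_mem_eigSet {A : Matrix N N ℝ} (hA : A.IsHermitian) (i : N) :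
    hA.eigenvalues i ∈ eigSet A := by
  refine ⟨(WithLp.equiv 2 _) (hA.eigenvectorBasis i), ?_, hA.mulVec_eigenvectorBasis i⟩
  intro h0
  have hb := hA.eigenvectorBasis.orthonormal.1 i
  have hz : hA.eigenvectorBasis i = 0 := by
    apply (WithLp.equiv 2 _).injective
    rw [h0]
    simp
  rw [hz, norm_zero] at hb
  norm_num at hb

lemma sum_eigenvalues_eq_trace {A : Matrix N N ℝ} (hA : A.IsHermitian) :
    ∑ i, hA.eigenvalues i = A.trace := by
  rw [hA.trace_eq_sum_eigenvalues]
  simp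

lemma eig_le_two_mul_deg {V : Type*} [Fintype V] [DecidableEq V] (G : SimpleGraph V)
    [DecidableRel G.Adj] (d : ℕ) (hd : ∀ v, G.degree v ≤ d) {μ : ℝ}
    (hmem : μ ∈ eigSet (G.lapMatrix ℝ)) : μ ≤ 2*(d:ℝ) := by
  obtain ⟨x, hx0, hxe⟩ := hmem
  obtain ⟨w, hw⟩ := Function.ne_iff.mp hx0
  obtain ⟨u, -, hu⟩ := Finset.exists_max_image Finset.univ (fun v => |x v|)
    ⟨w, Finset.mem_univ w⟩
  have hw' : w ∈ Finset.univ := Finset.mem_univ w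
  have hxu : 0 < |x u| := lt_of_lt_of_le (abs_pos.mpr hw) (hu w hw')
  have heq := congrFun hxe u
  rw [SimpleGraph.lapMatrix_mulVec_apply] at heq
  have heq' : (G.degree u : ℝ) * x u - ∑ v ∈ G.neighborFinset u, x v = μ * x u := by
    rw [heq]; simp
  have hs : |∑ v ∈ G.neighborFinset u, x v| ≤ (G.degree u : ℝ) * |x u| := by
    calc |∑ v ∈ G.neighborFinset u, x v| ≤ ∑ v ∈ G.neighborFinset u, |x v| :=
          Finset.abs_sum_le_sum_abs _ _
      _ ≤ ∑ _v ∈ G.neighborFinset u, |x u| :=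
          Finset.sum_le_sum fun v _ => hu v (Finset.mem_univ v)
      _ = (G.degree u : ℝ) * |x u| := by
          rw [Finset.sum_const, nsmul_eq_mul, SimpleGraph.card_neighborFinset_eq_degree]
  have habs : |μ| * |x u| ≤ 2*(d:ℝ)*|x u| := by
    have hdr : (G.degree u : ℝ) ≤ d := by exact_mod_cast hd u
    calc |μ| * |x u| = |μ * x u| := (abs_mul _ _).symm
      _ = |(G.degree u : ℝ) * x u - ∑ v ∈ G.neighborFinset u, x v| := by rw [heq']
      _ ≤ |(G.degree u : ℝ) * x u| + |∑ v ∈ G.neighborFinset u, x v| := abs_sub _ _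
      _ ≤ (G.degree u : ℝ) * |x u| + (G.degree u : ℝ) * |x u| := by
          rw [abs_mul, abs_of_nonneg (by positivity : (0:ℝ) ≤ (G.degree u : ℝ))]
          linarith [hs]
      _ ≤ 2*(d:ℝ)*|x u| := by nlinarith [abs_nonneg (x u)]
  calc μ ≤ |μ| := le_abs_self μ
    _ ≤ 2*(d:ℝ) := le_of_mul_le_mul_right (by linarith) hxu
end Spectral

section Spectral2
variable {N : Type*} [Fintype N] [DecidableEq N]

lemma inner_euclidean (f g : EuclideanSpace ℝ N) :
    (inner ℝ f g : ℝ) = ∑ u, f u * g u := by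
  simp [PiLp.inner_apply, RCLike.inner_apply, conj_trivial]
  exact Finset.sum_congr rfl fun _ _ => mul_comm _ _

lemma dot_mulVec_symm {A : Matrix N N ℝ} (hA : A.IsHermitian) (x y : N → ℝ) :
    x ⬝ᵥ (A *ᵥ y) = (A *ᵥ x) ⬝ᵥ y := by
  rw [dotProduct_mulVec]
  congr 1
  have hT : Aᵀ = A := by
    have := hA
    rwa [Matrix.IsHermitian, Matrix.conjTranspose_eq_transpose_of_trivial] at this
  rw [← hT, Matrix.vecMul_transpose, hT]

lemma coeff_inner {A : Matrix N N ℝ} (hA : A.IsHermitian) (y : N → ℝ) (i : N) :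
    (inner ℝ (hA.eigenvectorBasis i) ((WithLp.equiv 2 (N → ℝ)).symm y) : ℝ)
      = (fun u => (WithLp.equiv 2 (N → ℝ)) (hA.eigenvectorBasis i) u) ⬝ᵥ y := by
  rw [inner_euclidean]
  simp [dotProduct]

lemma coeff_A_inner {A : Matrix N N ℝ} (hA : A.IsHermitian) (y : N → ℝ) (i : N) :
    (inner ℝ (hA.eigenvectorBasis i) ((WithLp.equiv 2 (N → ℝ)).symm (A *ᵥ y)) : ℝ)
      = hA.eigenvalues i *
        (inner ℝ (hA.eigenvectorBasis i) ((WithLp.equiv 2 (N → ℝ)).symm y) : ℝ) := by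
  rw [coeff_inner hA, coeff_inner hA]
  erw [dot_mulVec_symm hA, hA.mulVec_eigenvectorBasis i, smul_dotProduct]
  simp only [smul_eq_mul]
  rfl

lemma spectral_parseval {A : Matrix N N ℝ} (hA : A.IsHermitian) (y : N → ℝ) :
    ∑ i, ((inner ℝ (hA.eigenvectorBasis i) ((WithLp.equiv 2 (N → ℝ)).symm y)) : ℝ)^2
      = ∑ u, (y u)^2 := by
  have hP := hA.eigenvectorBasis.sum_inner_mul_inner
    ((WithLp.equiv 2 (N → ℝ)).symm y) ((WithLp.equiv 2 (N → ℝ)).symm y)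
  have hcomm : ∀ i, (inner ℝ ((WithLp.equiv 2 (N → ℝ)).symm y) (hA.eigenvectorBasis i) : ℝ)
      = (inner ℝ (hA.eigenvectorBasis i) ((WithLp.equiv 2 (N → ℝ)).symm y) : ℝ) :=
    fun i => real_inner_comm _ _
  rw [Finset.sum_congr rfl (fun i _ => by rw [hcomm i])] at hP
  rw [Finset.sum_congr rfl (fun i _ => (sq ((inner ℝ (hA.eigenvectorBasis i)
    ((WithLp.equiv 2 (N → ℝ)).symm y)) : ℝ)).symm)] at hP
  rw [hP, inner_euclidean]
  refine Finset.sum_congr rfl fun u _ => ?_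
  simp [sq]

lemma spectral_quad {A : Matrix N N ℝ} (hA : A.IsHermitian) (y : N → ℝ) :
    ∑ i, hA.eigenvalues i *
      ((inner ℝ (hA.eigenvectorBasis i) ((WithLp.equiv 2 (N → ℝ)).symm y)) : ℝ)^2
      = y ⬝ᵥ (A *ᵥ y) := by
  have hQ := hA.eigenvectorBasis.sum_inner_mul_inner
    ((WithLp.equiv 2 (N → ℝ)).symm y) ((WithLp.equiv 2 (N → ℝ)).symm (A *ᵥ y))
  have hterm : ∀ i, (inner ℝ ((WithLp.equiv 2 (N → ℝ)).symm y) (hA.eigenvectorBasis i) : ℝ) *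
      (inner ℝ (hA.eigenvectorBasis i) ((WithLp.equiv 2 (N → ℝ)).symm (A *ᵥ y)) : ℝ)
      = hA.eigenvalues i *
        ((inner ℝ (hA.eigenvectorBasis i) ((WithLp.equiv 2 (N → ℝ)).symm y)) : ℝ)^2 := by
    intro i
    rw [coeff_A_inner hA, real_inner_comm]
    ring
  rw [Finset.sum_congr rfl fun i _ => hterm i] at hQ
  rw [hQ, inner_euclidean]
  rfl
end Spectral2

section Glue
variable {n k : ℕ} [NeZero n] [NeZero k] (hn : 3 ≤ n) (hk : 2 ≤ k)

lemma trace_lap : ((ringClique n k).lapMatrix ℝ).trace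
    = ∑ u : Fin n × Fin k, ((ringClique n k).degree u : ℝ) := by
  rw [Matrix.trace]
  refine Finset.sum_congr rfl fun u _ => ?_
  simp [Matrix.diag, SimpleGraph.lapMatrix, SimpleGraph.degMatrix]

include hn hk in
lemma eig_lower {μ : ℝ} (hmem : μ ∈ eigSet ((ringClique n k).lapMatrix ℝ))
    (hpos : 0 < μ) : 1 ≤ (k:ℝ)*(n:ℝ)^2*μ := by
  classical
  obtain ⟨x, hx0, hxe⟩ := hmem
  have hsym := (ringClique n k).isSymm_lapMatrix (R := ℝ)
  set L := (ringClique n k).lapMatrix ℝ with hLdef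
  have hcol : ∀ v, ∑ u, L u v = 0 := by
    intro v
    have hrow := congrFun ((ringClique n k).lapMatrix_mulVec_const_eq_zero (R := ℝ)) v
    simp only [Matrix.mulVec, dotProduct, mul_one, Pi.zero_apply] at hrow
    calc ∑ u, L u v = ∑ u, L v u := Finset.sum_congr rfl fun u _ => hsym.apply v u
      _ = 0 := hrow
  have hsum : ∑ u, x u = 0 := by
    have h1 : μ * ∑ u, x u = 0 := by
      calc μ * ∑ u, x u = ∑ u, (μ • x) u := by
            rw [Finset.mul_sum]
            exact Finset.sum_congr rfl fun u _ => by simp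
        _ = ∑ u, (L *ᵥ x) u := by rw [hxe]
        _ = ∑ u, ∑ v, L u v * x v := rfl
        _ = ∑ v, (∑ u, L u v) * x v := by
            rw [Finset.sum_comm]
            exact Finset.sum_congr rfl fun v _ => (Finset.sum_mul _ _ _).symm
        _ = 0 := by simp [hcol]
    rcases mul_eq_zero.mp h1 with h | h
    · exact absurd h hpos.ne'
    · exact h
  have hquad : x ⬝ᵥ (L *ᵥ x) = μ * ∑ u, (x u)^2 := by
    rw [hxe, dotProduct, Finset.mul_sum]
    refine Finset.sum_congr rfl fun u _ => ?_
    simp [sq]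
    ring
  have hform : x ⬝ᵥ (L *ᵥ x)
      = (∑ u : Fin n × Fin k, ∑ v : Fin n × Fin k,
          if (ringClique n k).Adj u v then (x u - x v)^2 else 0) / 2 := by
    rw [← Matrix.toLinearMap₂'_apply']
    exact SimpleGraph.lapMatrix_toLinearMap₂' ℝ (ringClique n k) x
  have hql := quad_lower hn x
  have hnb := norm_bound hn hk x hsum
  obtain ⟨u0, hu0⟩ := Function.ne_iff.mp hx0
  have hxsq : 0 < ∑ u, (x u)^2 := by
    have h1 : (x u0)^2 ≤ ∑ u, (x u)^2 :=
      Finset.single_le_sum (fun u _ => sq_nonneg (x u)) (Finset.mem_univ u0)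
    have hx0' : x u0 ≠ 0 := by simpa using hu0
    have h2 : 0 < (x u0)^2 := by positivity
    linarith
  set QD := (∑ i : Fin n, ∑ a : Fin k, (x (i,a) - x (i,0))^2)
      + ∑ i : Fin n, (x (i+1,0) - x (i,0))^2 with hQD
  have h2 : QD ≤ μ * ∑ u, (x u)^2 := by
    have := hform ▸ hquad
    linarith [hql]
  have h4 : ∑ u, (x u)^2 ≤ ((k:ℝ)*(n:ℝ)^2) * (μ * ∑ u, (x u)^2) := by
    calc ∑ u, (x u)^2 ≤ ((k:ℝ)*(n:ℝ)^2) * QD := hnb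
      _ ≤ ((k:ℝ)*(n:ℝ)^2) * (μ * ∑ u, (x u)^2) :=
          mul_le_mul_of_nonneg_left h2 (by positivity)
  have h5 : 1 * (∑ u, (x u)^2) ≤ ((k:ℝ)*(n:ℝ)^2*μ) * (∑ u, (x u)^2) := by
    rw [one_mul]
    calc ∑ u, (x u)^2 ≤ ((k:ℝ)*(n:ℝ)^2) * (μ * ∑ u, (x u)^2) := h4
      _ = ((k:ℝ)*(n:ℝ)^2*μ) * (∑ u, (x u)^2) := by ring
  exact le_of_mul_le_mul_right h5 hxsq

include hn hk in
lemma exists_big (hL : ((ringClique n k).lapMatrix ℝ).IsHermitian) :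
    ∃ i : Fin n × Fin k, (k:ℝ) - 1 ≤ hL.eigenvalues i := by
  by_contra hcon
  push_neg at hcon
  haveI : Nonempty (Fin n × Fin k) := ⟨(0, 0)⟩
  have h1 : ∑ i : Fin n × Fin k, hL.eigenvalues i
      < ∑ _i : Fin n × Fin k, ((k:ℝ) - 1) :=
    Finset.sum_lt_sum_of_nonempty Finset.univ_nonempty fun i _ => hcon i
  have h2 : ∑ _i : Fin n × Fin k, ((k:ℝ)-1)
      ≤ ∑ u : Fin n × Fin k, ((ringClique n k).degree u : ℝ) := by
    refine Finset.sum_le_sum fun u _ => ?_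
    have hd := degree_ge_rc (n := n) (k := k) u
    have hcast : ((k - 1 : ℕ) : ℝ) = (k:ℝ) - 1 := by
      have : 1 ≤ k := by omega
      push_cast [this]
      ring
    rw [← hcast]
    exact_mod_cast hd
  rw [sum_eigenvalues_eq_trace hL, trace_lap] at h1
  linarith

include hn hk in
lemma exists_small (hL : ((ringClique n k).lapMatrix ℝ).IsHermitian) :
    ∃ i : Fin n × Fin k, 0 < hL.eigenvalues i ∧
      hL.eigenvalues i ≤ 288/((k:ℝ)*(n:ℝ)^2) := by
  classical
  have hn0 : (0:ℝ) < n := by exact_mod_cast (by omega : 0 < n)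
  have hk0 : (0:ℝ) < k := by exact_mod_cast (by omega : 0 < k)
  set L := (ringClique n k).lapMatrix ℝ with hLdef
  set g : Fin n → ℝ := fun i => ((min i.val (n - i.val) : ℕ) : ℝ) with hg
  set m := (∑ i : Fin n, g i)/n with hm
  set y : Fin n × Fin k → ℝ := fun u => g u.1 - m with hy
  have hysum : ∑ u : Fin n × Fin k, y u = 0 := by
    rw [Fintype.sum_prod_type]
    have e1 : ∀ i : Fin n, ∑ _a : Fin k, (g i - m) = (k:ℝ)*(g i - m) := fun i => by
      rw [Finset.sum_const, Finset.card_univ, Fintype.card_fin, nsmul_eq_mul]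
    have e2 : ∀ (i : Fin n) (a : Fin k), y (i, a) = g i - m := fun i a => rfl
    calc ∑ i : Fin n, ∑ a : Fin k, y (i, a)
        = ∑ i : Fin n, (k:ℝ)*(g i - m) := by
          refine Finset.sum_congr rfl fun i _ => ?_
          rw [Finset.sum_congr rfl fun a _ => e2 i a, e1 i]
      _ = (k:ℝ) * ((∑ i : Fin n, g i) - n * m) := by
          rw [← Finset.mul_sum, Finset.sum_sub_distrib, Finset.sum_const, Finset.card_univ,
            Fintype.card_fin, nsmul_eq_mul]
      _ = 0 := by
          rw [hm]
          field_simp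
          ring
  have hynorm : (k:ℝ)*((n:ℝ)^3/144) ≤ ∑ u : Fin n × Fin k, (y u)^2 := by
    rw [Fintype.sum_prod_type]
    have e2 : ∀ (i : Fin n) (a : Fin k), (y (i, a))^2 = (g i - m)^2 := fun i a => rfl
    have e1 : ∀ i : Fin n, ∑ _a : Fin k, ((g i - m))^2 = (k:ℝ)*(g i - m)^2 := fun i => by
      rw [Finset.sum_const, Finset.card_univ, Fintype.card_fin, nsmul_eq_mul]
    have estep : ∑ i : Fin n, ∑ a : Fin k, (y (i,a))^2 = (k:ℝ) * ∑ i : Fin n, (g i - m)^2 := by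
      rw [Finset.sum_congr rfl fun i _ => by
        rw [Finset.sum_congr rfl fun a _ => e2 i a, e1 i], ← Finset.mul_sum]
    rw [estep]
    have := gvar hn m
    have hgv : (n:ℝ)^3/144 ≤ ∑ i : Fin n, (g i - m)^2 := this
    exact mul_le_mul_of_nonneg_left hgv hk0.le
  have hyquad : y ⬝ᵥ (L *ᵥ y) ≤ (n:ℝ) := by
    have hform : y ⬝ᵥ (L *ᵥ y)
        = (∑ u : Fin n × Fin k, ∑ v : Fin n × Fin k,
            if (ringClique n k).Adj u v then (y u - y v)^2 else 0) / 2 := by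
      rw [← Matrix.toLinearMap₂'_apply']
      exact SimpleGraph.lapMatrix_toLinearMap₂' ℝ (ringClique n k) y
    have hmatch : ∀ u v : Fin n × Fin k,
        (if (ringClique n k).Adj u v then (y u - y v)^2 else 0)
        = (if (ringClique n k).Adj u v then ((g u.1) - (g v.1))^2 else 0) := by
      intro u v
      by_cases h : (ringClique n k).Adj u v
      · rw [if_pos h, if_pos h]
        have : y u - y v = g u.1 - g v.1 := by rw [hy]; ring
        rw [this]
      · rw [if_neg h, if_neg h]
    have hq := quad_upper hn hk g (fun i => g_lip hn i)
    rw [hform, Finset.sum_congr rfl fun u _ => Finset.sum_congr rfl fun v _ => hmatch u v]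
    linarith
  -- spectral decomposition
  set c : Fin n × Fin k → ℝ := fun i =>
    (inner ℝ (hL.eigenvectorBasis i) ((WithLp.equiv 2 (Fin n × Fin k → ℝ)).symm y) : ℝ) with hc
  have hPar : ∑ i, (c i)^2 = ∑ u, (y u)^2 := spectral_parseval hL y
  have hQuad : ∑ i, hL.eigenvalues i * (c i)^2 = y ⬝ᵥ (L *ᵥ y) := spectral_quad hL y
  have hnonneg : ∀ i, 0 ≤ hL.eigenvalues i := fun i =>
    (SimpleGraph.posSemidef_lapMatrix ℝ (ringClique n k)).eigenvalues_nonneg i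
  have hker : ∀ i : Fin n × Fin k, hL.eigenvalues i = 0 → c i = 0 := by
    intro i hzero
    have hbz : L *ᵥ (WithLp.equiv 2 (Fin n × Fin k → ℝ)) (hL.eigenvectorBasis i) = 0 := by
      erw [hL.mulVec_eigenvectorBasis i, hzero, zero_smul]
    have hlin : Matrix.toLin' L ((WithLp.equiv 2 (Fin n × Fin k → ℝ)) (hL.eigenvectorBasis i)) = 0 := by
      rw [Matrix.toLin'_apply]
      exact hbz
    have hconst := (ringClique n k).lapMatrix_mulVec_eq_zero_iff_forall_reachable.mp hbz
    set b0 : ℝ := (WithLp.equiv 2 (Fin n × Fin k → ℝ)) (hL.eigenvectorBasis i) (0, 0) with hb0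
    have hallconst : ∀ u : Fin n × Fin k,
        (WithLp.equiv 2 (Fin n × Fin k → ℝ)) (hL.eigenvectorBasis i) u = b0 :=
      fun u => hconst u (0,0) (reachable_all hn hk u (0,0))
    have hc2 : c i = (inner ℝ (hL.eigenvectorBasis i)
        ((WithLp.equiv 2 (Fin n × Fin k → ℝ)).symm y) : ℝ) := rfl
    rw [hc2, coeff_inner hL]
    calc (fun u => (WithLp.equiv 2 (Fin n × Fin k → ℝ)) (hL.eigenvectorBasis i) u) ⬝ᵥ y
        = ∑ u, (WithLp.equiv 2 (Fin n × Fin k → ℝ)) (hL.eigenvectorBasis i) u * y u := rfl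
      _ = ∑ u, b0 * y u := Finset.sum_congr rfl fun u _ => by rw [hallconst u]
      _ = b0 * ∑ u, y u := by rw [Finset.mul_sum]
      _ = 0 := by rw [hysum, mul_zero]
  by_contra hcon
  push_neg at hcon
  set R := 288/((k:ℝ)*(n:ℝ)^2) with hR
  have hR0 : 0 < R := by rw [hR]; positivity
  have hterm : ∀ i : Fin n × Fin k, R * (c i)^2 ≤ hL.eigenvalues i * (c i)^2 := by
    intro i
    rcases eq_or_lt_of_le (hnonneg i) with h | h
    · rw [← h, hker i h.symm]
      simp
    · have := hcon i h
      have h2 : R ≤ hL.eigenvalues i := le_of_lt this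
      exact mul_le_mul_of_nonneg_right h2 (sq_nonneg _)
  have hchain : R * ((k:ℝ)*((n:ℝ)^3/144)) ≤ (n:ℝ) := by
    calc R * ((k:ℝ)*((n:ℝ)^3/144)) ≤ R * ∑ u, (y u)^2 :=
          mul_le_mul_of_nonneg_left hynorm hR0.le
      _ = R * ∑ i, (c i)^2 := by rw [hPar]
      _ = ∑ i, R * (c i)^2 := by rw [Finset.mul_sum]
      _ ≤ ∑ i, hL.eigenvalues i * (c i)^2 := Finset.sum_le_sum fun i _ => hterm i
      _ = y ⬝ᵥ (L *ᵥ y) := hQuad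
      _ ≤ (n:ℝ) := hyquad
  have hcalc : R * ((k:ℝ)*((n:ℝ)^3/144)) = 2*(n:ℝ) := by
    rw [hR]
    field_simp
    ring
  rw [hcalc] at hchain
  linarith

end Glue

theorem chi_ringClique_order :
    ∃ c₁ c₂ : ℝ, 0 < c₁ ∧ c₁ ≤ c₂ ∧ ∀ n k : ℕ, 3 ≤ n → 2 ≤ k →
      c₁ * ((n : ℝ) ^ 2 * (k : ℝ) ^ 2) ≤ chi ((ringClique n k).lapMatrix ℝ) ∧
      chi ((ringClique n k).lapMatrix ℝ) ≤ c₂ * ((n : ℝ) ^ 2 * (k : ℝ) ^ 2) := by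
  refine ⟨1/576, 4, by norm_num, by norm_num, fun n k hn hk => ?_⟩
  haveI : NeZero n := ⟨by omega⟩
  haveI : NeZero k := ⟨by omega⟩
  have hn0 : (0:ℝ) < n := by exact_mod_cast (by omega : 0 < n)
  have hk0 : (0:ℝ) < k := by exact_mod_cast (by omega : 0 < k)
  have hn3 : (3:ℝ) ≤ n := by exact_mod_cast hn
  have hk2 : (2:ℝ) ≤ k := by exact_mod_cast hk
  set L := (ringClique n k).lapMatrix ℝ with hLdef
  have hherm : L.IsHermitian := (SimpleGraph.posSemidef_lapMatrix ℝ (ringClique n k)).1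
  have hub : ∀ μ ∈ eigSet L, μ ≤ 2*((k:ℝ)+2) := by
    intro μ hμ
    have := eig_le_two_mul_deg (ringClique n k) (k+2) (fun v => degree_le_rc hn hk v) hμ
    push_cast at this
    linarith
  have hbddAbove : BddAbove (eigSet L) := ⟨2*((k:ℝ)+2), fun μ hμ => hub μ hμ⟩
  obtain ⟨i0, hi0⟩ := exists_big hn hk hherm
  have hne : (eigSet L).Nonempty := ⟨hherm.eigenvalues i0, eigenvalue_mem_eigSet hherm i0⟩
  have hmax_lb : (k:ℝ) - 1 ≤ lamMax L :=
    le_trans hi0 (le_csSup hbddAbove (eigenvalue_mem_eigSet hherm i0))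
  have hmax_ub : lamMax L ≤ 2*((k:ℝ)+2) := csSup_le hne fun μ hμ => hub μ hμ
  obtain ⟨i1, hi1pos, hi1le⟩ := exists_small hn hk hherm
  have hSmem : hherm.eigenvalues i1 ∈ {μ ∈ eigSet L | 0 < μ} :=
    ⟨eigenvalue_mem_eigSet hherm i1, hi1pos⟩
  have hSbdd : BddBelow {μ ∈ eigSet L | 0 < μ} := ⟨0, fun μ hμ => hμ.2.le⟩
  have hmin_ub : lamMinPos L ≤ 288/((k:ℝ)*(n:ℝ)^2) :=
    le_trans (csInf_le hSbdd hSmem) hi1le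
  have hmin_lb : 1/((k:ℝ)*(n:ℝ)^2) ≤ lamMinPos L := by
    refine le_csInf ⟨_, hSmem⟩ fun μ hμ => ?_
    have h1 := eig_lower hn hk hμ.1 hμ.2
    rw [div_le_iff₀ (by positivity)]
    linarith
  have hminpos : 0 < lamMinPos L := lt_of_lt_of_le (by positivity) hmin_lb
  have hchi : chi L = lamMax L / lamMinPos L := rfl
  constructor
  · rw [hchi]
    have hA : (k:ℝ)/2 ≤ lamMax L := by linarith
    calc (1/576) * ((n:ℝ)^2*(k:ℝ)^2) = ((k:ℝ)/2) / (288/((k:ℝ)*(n:ℝ)^2)) := by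
          field_simp
          ring
      _ ≤ ((k:ℝ)/2) / lamMinPos L :=
          div_le_div_of_nonneg_left (by positivity) hminpos hmin_ub
      _ ≤ lamMax L / lamMinPos L := (div_le_div_iff_of_pos_right hminpos).mpr hA
  · rw [hchi]
    calc lamMax L / lamMinPos L ≤ (2*((k:ℝ)+2)) / lamMinPos L :=
          (div_le_div_iff_of_pos_right hminpos).mpr hmax_ub
      _ ≤ (2*((k:ℝ)+2)) / (1/((k:ℝ)*(n:ℝ)^2)) :=
          div_le_div_of_nonneg_left (by positivity) (by positivity) hmin_lb
      _ = 2*((k:ℝ)+2)*((k:ℝ)*(n:ℝ)^2) := by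
          field_simp
      _ ≤ 4 * ((n:ℝ)^2*(k:ℝ)^2) := by
          have key : 0 ≤ 2*(k:ℝ)*(n:ℝ)^2*((k:ℝ)-2) :=
            mul_nonneg (by positivity) (by linarith)
          nlinarith [key]
end
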